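/- arXiv:2509.07271 — 2 statements merged into one kernel-verified Lean document; each statement's English description precedes it below -/
import Mathlib

section
/- Bound on type II errors between a CQ channel and a set of free CQ channels: For any parameters α > 1 and ε ∈ [0,1), any family 𝓕 of sets of free CQ channels satisfying Axioms CQ1, CQ2, and CQ4, and any CQ channel Φ : X → D(H), it holds that −log β_ε(Φ‖𝓕) ≤ D̃_α(Φ‖𝓕) + (α/(α−1)) log(1/(1−ε)). -/
open scoped Kronecker
open Filter Matrix
open scoped ComplexOrder

attribute [local instance] Classical.propDecidable

noncomputable section

namespace CQ

variable {X d : Type*}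

/-- Apply a real function to a matrix via its spectral decomposition (junk value `0` if the
matrix is not Hermitian).  For positive semidefinite matrices and `f 0 = 0` this realizes the
"on-support" functional calculus. -/
def matFun [Fintype d] [DecidableEq d] (f : ℝ → ℝ) (A : Matrix d d ℂ) : Matrix d d ℂ :=
  if hA : A.IsHermitian then
    (hA.eigenvectorUnitary : Matrix d d ℂ) *
      Matrix.diagonal (fun i => (f (hA.eigenvalues i) : ℂ)) *
      star (hA.eigenvectorUnitary : Matrix d d ℂ)
  else 0

/-- Matrix logarithm taken on the support. -/
def matLog [Fintype d] [DecidableEq d] (A : Matrix d d ℂ) : Matrix d d ℂ := matFun Real.log A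

/-- Real matrix power taken on the support. -/
def matRpow [Fintype d] [DecidableEq d] (A : Matrix d d ℂ) (r : ℝ) : Matrix d d ℂ :=
  matFun (fun t => t ^ r) A

/-- Projection `{A ≥ 0}` onto the eigenspaces of nonnegative eigenvalues of a Hermitian matrix. -/
def posProj [Fintype d] [DecidableEq d] (A : Matrix d d ℂ) : Matrix d d ℂ :=
  matFun (fun t => if 0 ≤ t then 1 else 0) A

/-- `supp A ⊆ supp B`, expressed via ranges. -/
def suppLE [Fintype d] [DecidableEq d] (A B : Matrix d d ℂ) : Prop :=
  LinearMap.range (Matrix.toLin' A) ≤ LinearMap.range (Matrix.toLin' B)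

/-- Quantum (Umegaki) relative entropy, with value `⊤` when the support condition fails. -/
def qRelEntropy [Fintype d] [DecidableEq d] (ρ σ : Matrix d d ℂ) : EReal :=
  if suppLE ρ σ then (((ρ * (matLog ρ - matLog σ)).trace.re : ℝ) : EReal) else ⊤

/-- Sandwiched Rényi relative entropy of order `α`, with value `⊤` when the support condition
fails. -/
def sandRenyi [Fintype d] [DecidableEq d] (α : ℝ) (ρ σ : Matrix d d ℂ) : EReal :=
  if suppLE ρ σ then
    ((((α - 1)⁻¹ *
        Real.log ((matRpow (matRpow σ ((1 - α) / (2 * α)) * ρ *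
          matRpow σ ((1 - α) / (2 * α))) α).trace.re)) : ℝ) : EReal)
  else ⊤

/-- A CQ channel: every output is a density operator. -/
def IsCQChannel [Fintype d] (Φ : X → Matrix d d ℂ) : Prop :=
  ∀ x, (Φ x).PosSemidef ∧ (Φ x).trace = 1

/-- Channel divergence `D(Φ₁‖Φ₂) = max_x D(Φ₁(x)‖Φ₂(x))`. -/
def chDiv [Fintype X] [Fintype d] [DecidableEq d] (Φ₁ Φ₂ : X → Matrix d d ℂ) : EReal :=
  ⨆ x, qRelEntropy (Φ₁ x) (Φ₂ x)

/-- Sandwiched Rényi channel divergence. -/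
def chRenyiDiv [Fintype X] [Fintype d] [DecidableEq d] (α : ℝ) (Φ₁ Φ₂ : X → Matrix d d ℂ) :
    EReal :=
  ⨆ x, sandRenyi α (Φ₁ x) (Φ₂ x)

/-- `D(Φ‖𝓕) = min_{Φf ∈ 𝓕} D(Φ‖Φf)`. -/
def chDivSet [Fintype X] [Fintype d] [DecidableEq d] (Φ : X → Matrix d d ℂ)
    (S : Set (X → Matrix d d ℂ)) : EReal :=
  ⨅ Φf ∈ S, chDiv Φ Φf

/-- `D̃_α(Φ‖𝓕) = min_{Φf ∈ 𝓕} D̃_α(Φ‖Φf)`. -/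
def chRenyiDivSet [Fintype X] [Fintype d] [DecidableEq d] (α : ℝ) (Φ : X → Matrix d d ℂ)
    (S : Set (X → Matrix d d ℂ)) : EReal :=
  ⨅ Φf ∈ S, chRenyiDiv α Φ Φf

/-- Probability distribution on a finite alphabet. -/
def IsProbDist [Fintype X] (p : X → ℝ) : Prop := (∀ x, 0 ≤ p x) ∧ ∑ x, p x = 1

/-- POVM element: `0 ≤ T ≤ 1`. -/
def IsPOVMElem [Fintype d] [DecidableEq d] (T : Matrix d d ℂ) : Prop :=
  T.PosSemidef ∧ (1 - T).PosSemidef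

/-- Type-I error of the test `(p, {T_x})` for the channel `Φ`. -/
def typeIErrVal [Fintype X] [Fintype d] [DecidableEq d] (Φ : X → Matrix d d ℂ) (p : X → ℝ)
    (T : X → Matrix d d ℂ) : ℝ :=
  ∑ x, p x * ((1 - T x) * Φ x).trace.re

/-- Optimal type-II error `β_ε(Φ₁‖Φ₂)` between two CQ channels. -/
def typeIIErr [Fintype X] [Fintype d] [DecidableEq d] (ε : ℝ) (Φ₁ Φ₂ : X → Matrix d d ℂ) : ℝ :=
  sInf { v | ∃ p T, IsProbDist p ∧ (∀ x, IsPOVMElem (T x)) ∧ typeIErrVal Φ₁ p T ≤ ε ∧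
    v = ∑ x, p x * (T x * Φ₂ x).trace.re }

/-- Optimal type-II error `β_ε(Φ‖𝓕)` against a set of CQ channels. -/
def typeIIErrSet [Fintype X] [Fintype d] [DecidableEq d] (ε : ℝ) (Φ : X → Matrix d d ℂ)
    (S : Set (X → Matrix d d ℂ)) : ℝ :=
  sInf { v | ∃ p T, IsProbDist p ∧ (∀ x, IsPOVMElem (T x)) ∧ typeIErrVal Φ p T ≤ ε ∧
    v = sSup { w | ∃ Φf ∈ S, w = ∑ x, p x * (T x * Φf x).trace.re } }

/-- Tensor product of two CQ channels. -/
def prodChannel {X' d' : Type*} (Φ : X → Matrix d d ℂ) (Φ' : X' → Matrix d' d' ℂ) :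
    X × X' → Matrix (d × d') (d × d') ℂ :=
  fun x => Φ x.1 ⊗ₖ Φ' x.2

/-- `n`-fold tensor power `Φ^{⊗n}` of a CQ channel, realized entrywise. -/
def powChannel (Φ : X → Matrix d d ℂ) (n : ℕ) :
    (Fin n → X) → Matrix (Fin n → d) (Fin n → d) ℂ :=
  fun xs => Matrix.of fun i j => ∏ k, Φ (xs k) (i k) (j k)

def finEquiv (n m : ℕ) (γ : Type*) : ((Fin n → γ) × (Fin m → γ)) ≃ (Fin (n + m) → γ) :=
  (Equiv.sumArrowEquivProdArrow (Fin n) (Fin m) γ).symm.trans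
    (Equiv.arrowCongr finSumFinEquiv (Equiv.refl γ))

/-- Tensor product of an `n`-fold and an `m`-fold CQ channel, as an `(n+m)`-fold CQ channel. -/
def cqTensor {n m : ℕ} (Φ : (Fin n → X) → Matrix (Fin n → d) (Fin n → d) ℂ)
    (Ψ : (Fin m → X) → Matrix (Fin m → d) (Fin m → d) ℂ) :
    (Fin (n + m) → X) → Matrix (Fin (n + m) → d) (Fin (n + m) → d) ℂ :=
  fun xs =>
    Matrix.reindex (finEquiv n m d) (finEquiv n m d)
      (Φ ((finEquiv n m X).symm xs).1 ⊗ₖ Ψ ((finEquiv n m X).symm xs).2)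

/-- All members of the family are CQ channels. -/
def FamilyCQ [Fintype d]
    (F : (n : ℕ) → Set ((Fin n → X) → Matrix (Fin n → d) (Fin n → d) ℂ)) : Prop :=
  ∀ n, ∀ Φ ∈ F n, IsCQChannel Φ

/-- Axiom CQ1: each set contains a CQ channel whose outputs are all full-rank,
equivalently bounded below by `Λ·I` for some `Λ ∈ (0,1]`. -/
def AxCQ1 [Fintype d] [DecidableEq d]
    (F : (n : ℕ) → Set ((Fin n → X) → Matrix (Fin n → d) (Fin n → d) ℂ)) : Prop :=
  ∀ n, ∃ Φfull ∈ F n, ∃ Λ : ℝ, 0 < Λ ∧ Λ ≤ 1 ∧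
    ∀ xs, (Φfull xs - Λ • (1 : Matrix (Fin n → d) (Fin n → d) ℂ)).PosSemidef

/-- Axiom CQ2: each set is compact. -/
def AxCQ2 (F : (n : ℕ) → Set ((Fin n → X) → Matrix (Fin n → d) (Fin n → d) ℂ)) : Prop :=
  ∀ n, IsCompact (F n)

/-- Axiom CQ3: the family is closed under tensor products. -/
def AxCQ3 (F : (n : ℕ) → Set ((Fin n → X) → Matrix (Fin n → d) (Fin n → d) ℂ)) : Prop :=
  ∀ n m, ∀ Φ ∈ F n, ∀ Ψ ∈ F m, cqTensor Φ Ψ ∈ F (n + m)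

/-- Axiom CQ4: each set is convex. -/
def AxCQ4 (F : (n : ℕ) → Set ((Fin n → X) → Matrix (Fin n → d) (Fin n → d) ℂ)) : Prop :=
  ∀ n, Convex ℝ (F n)

/-- Single-set version of Axiom CQ1. -/
def SetCQ1 [Fintype d] [DecidableEq d] (S : Set (X → Matrix d d ℂ)) : Prop :=
  ∃ Φfull ∈ S, ∃ Λ : ℝ, 0 < Λ ∧ Λ ≤ 1 ∧ ∀ x, (Φfull x - Λ • (1 : Matrix d d ℂ)).PosSemidef

/-- Trace distance `(1/2)‖A−B‖₁` (for Hermitian differences; junk `0` otherwise). -/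
def traceDist [Fintype d] [DecidableEq d] (A B : Matrix d d ℂ) : ℝ :=
  if h : (A - B).IsHermitian then (1 / 2) * ∑ i, |h.eigenvalues i| else 0

/-- Diamond distance between CQ channels. -/
def diamondDist [Fintype X] [Fintype d] [DecidableEq d] (Φ₁ Φ₂ : X → Matrix d d ℂ) : ℝ :=
  ⨆ x, traceDist (Φ₁ x) (Φ₂ x)

/-- Generalized robustness of a CQ channel with respect to a set of free CQ channels. -/
def genRobustness [Fintype X] [Fintype d] (S : Set (X → Matrix d d ℂ))
    (Φ : X → Matrix d d ℂ) : ℝ :=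
  sInf { s | 0 ≤ s ∧ ∃ Φ' : X → Matrix d d ℂ, IsCQChannel Φ' ∧
    (fun x => (1 + s)⁻¹ • (Φ x + s • Φ' x)) ∈ S }

/-- `N ⊗ id_k` acting blockwise. -/
def tensorIdMap {din dout : Type*}
    (N : Matrix din din ℂ →ₗ[ℂ] Matrix dout dout ℂ) (k : Type*)
    (M : Matrix (din × k) (din × k) ℂ) : Matrix (dout × k) (dout × k) ℂ :=
  Matrix.of fun a b => N (Matrix.of fun i j => M (i, a.2) (j, b.2)) a.1 b.1

/-- Completely positive and trace preserving linear map on matrices. -/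
def IsCPTP {din dout : Type*} [Fintype din] [Fintype dout]
    (N : Matrix din din ℂ →ₗ[ℂ] Matrix dout dout ℂ) : Prop :=
  (∀ (k : Type) [Fintype k], ∀ M : Matrix (din × k) (din × k) ℂ,
      M.PosSemidef → (tensorIdMap N k M).PosSemidef) ∧
  ∀ M : Matrix din din ℂ, (N M).trace = M.trace

/-- Action `(Θ ⊗ id)[Φ]` of a superchannel (given by `p_Θ` and CPTP maps `N`) on a CQ channel
with auxiliary classical input and quantum output. -/
def superAct {Xin Xout Xaux din dout daux : Type*} [Fintype Xin]
    (p : Xout → Xin → ℝ)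
    (N : Xin → Xout → Matrix din din ℂ →ₗ[ℂ] Matrix dout dout ℂ)
    (Φ : Xin × Xaux → Matrix (din × daux) (din × daux) ℂ) :
    Xout × Xaux → Matrix (dout × daux) (dout × daux) ℂ :=
  fun x => ∑ xi : Xin, p x.1 xi • tensorIdMap (N xi x.1) daux (Φ (xi, x.2))

/-- The index `b·M + m` of the `m`-th member of the `b`-th complete block of size `M`. -/
def grpIdx {n M : ℕ} (b : Fin (n / M)) (m : Fin M) : Fin n :=
  ⟨(b : ℕ) * M + m, by
    have h1 : ((b : ℕ) + 1) * M ≤ n / M * M :=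
      Nat.mul_le_mul_right M b.2
    have h3 : n / M * M ≤ n := Nat.div_mul_le_self n M
    have h4 : (m : ℕ) < M := m.2
    have h5 : (b : ℕ) * M + M ≤ n := by rw [add_mul, one_mul] at h1; omega
    omega⟩

/-- The index `(n/M)·M + k` of the `k`-th leftover position. -/
def remIdx {n M : ℕ} (k : Fin (n % M)) : Fin n :=
  ⟨n / M * M + k, by
    have h1 : n / M * M + n % M = n := by rw [mul_comm]; exact Nat.div_add_mod n M
    have h2 : (k : ℕ) < n % M := k.2
    omega⟩

/-- The channel `(Φ₂^{(M)})^{⊗ (n/M)} ⊗ Φfull^{⊗ (n % M)}`, realized entrywise on `n` tensor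
factors grouped into blocks of size `M` followed by the leftover factors. -/
def mixedPow {M : ℕ} (Φ₂M : (Fin M → X) → Matrix (Fin M → d) (Fin M → d) ℂ)
    (Φfull : X → Matrix d d ℂ) (n : ℕ) :
    (Fin n → X) → Matrix (Fin n → d) (Fin n → d) ℂ :=
  fun xs => Matrix.of fun i j =>
    (∏ b : Fin (n / M), Φ₂M (fun m => xs (grpIdx b m)) (fun m => i (grpIdx b m))
        (fun m => j (grpIdx b m))) *
    (∏ k : Fin (n % M), Φfull (xs (remIdx k)) (i (remIdx k)) (j (remIdx k)))



section Development
variable [Fintype d] [DecidableEq d]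

section SpectralTools

lemma u_star_mul {V : Matrix d d ℂ} (hV : V ∈ Matrix.unitaryGroup d ℂ) : star V * V = 1 :=
  Matrix.mem_unitaryGroup_iff'.mp hV

lemma u_mul_star {V : Matrix d d ℂ} (hV : V ∈ Matrix.unitaryGroup d ℂ) : V * star V = 1 :=
  Matrix.mem_unitaryGroup_iff.mp hV

lemma star_diag_coe (e : d → ℝ) :
    star (Matrix.diagonal (fun i => (e i : ℂ))) = Matrix.diagonal (fun i => (e i : ℂ)) := by
  have h : (star fun i => ((e i : ℂ))) = fun i => ((e i : ℂ)) :=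
    funext fun i => Complex.conj_ofReal _
  rw [Matrix.star_eq_conjTranspose, Matrix.diagonal_conjTranspose, h]

lemma isHermitian_conj_diag {V : Matrix d d ℂ} (e : d → ℝ) :
    (V * Matrix.diagonal (fun i => (e i : ℂ)) * star V).IsHermitian := by
  have h := star_diag_coe e
  unfold Matrix.IsHermitian
  rw [Matrix.star_eq_conjTranspose] at h ⊢
  rw [Matrix.conjTranspose_mul, Matrix.conjTranspose_mul, h, Matrix.conjTranspose_conjTranspose,
    Matrix.mul_assoc]

/-- intertwining: if `diagonal a * F = F * diagonal b` then the same holds with `f` applied. -/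
lemma intertwine {F : Matrix d d ℂ} {a b : d → ℝ} (f : ℝ → ℝ)
    (h : Matrix.diagonal (fun i => (a i : ℂ)) * F = F * Matrix.diagonal (fun i => (b i : ℂ))) :
    Matrix.diagonal (fun i => (f (a i) : ℂ)) * F
      = F * Matrix.diagonal (fun i => (f (b i) : ℂ)) := by
  ext i j
  have hent : (a i : ℂ) * F i j = F i j * (b j : ℂ) := by
    have := congrFun (congrFun h i) j
    simpa [Matrix.diagonal_mul, Matrix.mul_diagonal] using this
  simp only [Matrix.diagonal_mul, Matrix.mul_diagonal]
  by_cases hF : F i j = 0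
  · simp [hF]
  · have hab : (a i : ℂ) = (b j : ℂ) := by
      have : (a i : ℂ) * F i j = (b j : ℂ) * F i j := by rw [hent, mul_comm]
      exact mul_right_cancel₀ hF this
    have : a i = b j := by exact_mod_cast hab
    rw [this, mul_comm]

/-- Well-definedness of the functional calculus. -/
lemma matFun_conj (f : ℝ → ℝ) {V : Matrix d d ℂ} (hV : V ∈ Matrix.unitaryGroup d ℂ) (e : d → ℝ) :
    matFun f (V * Matrix.diagonal (fun i => (e i : ℂ)) * star V)
      = V * Matrix.diagonal (fun i => (f (e i) : ℂ)) * star V := by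
  have hA : (V * Matrix.diagonal (fun i => (e i : ℂ)) * star V).IsHermitian :=
    isHermitian_conj_diag e
  rw [matFun, dif_pos hA]
  set U : Matrix d d ℂ := (hA.eigenvectorUnitary : Matrix d d ℂ) with hUdef
  have hUU : star U * U = 1 := u_star_mul (hA.eigenvectorUnitary).2
  have hUU' : U * star U = 1 := u_mul_star (hA.eigenvectorUnitary).2
  have hVV : star V * V = 1 := u_star_mul hV
  have hVV' : V * star V = 1 := u_mul_star hV
  have cUU : ∀ M : Matrix d d ℂ, star U * (U * M) = M := fun M => by
    rw [← Matrix.mul_assoc, hUU, Matrix.one_mul]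
  have cUU' : ∀ M : Matrix d d ℂ, U * (star U * M) = M := fun M => by
    rw [← Matrix.mul_assoc, hUU', Matrix.one_mul]
  have cVV : ∀ M : Matrix d d ℂ, star V * (V * M) = M := fun M => by
    rw [← Matrix.mul_assoc, hVV, Matrix.one_mul]
  have cVV' : ∀ M : Matrix d d ℂ, V * (star V * M) = M := fun M => by
    rw [← Matrix.mul_assoc, hVV', Matrix.one_mul]
  have hco : (RCLike.ofReal ∘ hA.eigenvalues : d → ℂ) = fun i => (hA.eigenvalues i : ℂ) :=
    funext fun i => rfl
  have hspec : V * Matrix.diagonal (fun i => (e i : ℂ)) * star V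
      = U * Matrix.diagonal (fun i => (hA.eigenvalues i : ℂ)) * star U := by
    have h := hA.spectral_theorem
    rw [hco] at h
    exact h
  have hcomm : Matrix.diagonal (fun i => (hA.eigenvalues i : ℂ)) * (star U * V)
      = (star U * V) * Matrix.diagonal (fun i => (e i : ℂ)) := by
    have h := congrArg (fun M => star U * (M * V)) hspec
    simp only [Matrix.mul_assoc, cVV, cUU, hVV, hUU, Matrix.mul_one] at h
    simp only [Matrix.mul_assoc]
    exact h.symm
  have hcomm' := intertwine f hcomm
  have h2 := congrArg (fun M => U * (M * star V)) hcomm'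
  simp only [Matrix.mul_assoc, cUU', cVV', hVV', hUU', Matrix.mul_one] at h2
  simp only [Matrix.mul_assoc]
  exact h2

/-- `matFun` of a Hermitian matrix, spectral form. -/
lemma matFun_of_isHermitian (f : ℝ → ℝ) {A : Matrix d d ℂ} (hA : A.IsHermitian) :
    matFun f A = (hA.eigenvectorUnitary : Matrix d d ℂ) *
      Matrix.diagonal (fun i => (f (hA.eigenvalues i) : ℂ)) *
      star (hA.eigenvectorUnitary : Matrix d d ℂ) := by
  rw [matFun, dif_pos hA]

lemma spectral_decomp {A : Matrix d d ℂ} (hA : A.IsHermitian) :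
    A = (hA.eigenvectorUnitary : Matrix d d ℂ) *
      Matrix.diagonal (fun i => (hA.eigenvalues i : ℂ)) *
      star (hA.eigenvectorUnitary : Matrix d d ℂ) := by
  have h := hA.spectral_theorem
  have hco : (RCLike.ofReal ∘ hA.eigenvalues : d → ℂ) = fun i => (hA.eigenvalues i : ℂ) :=
    funext fun i => rfl
  rw [hco] at h
  exact h

/-- product of two conjugated diagonals -/
lemma conj_diag_mul {V : Matrix d d ℂ} (hV : V ∈ Matrix.unitaryGroup d ℂ) (a b : d → ℂ) :
    (V * Matrix.diagonal a * star V) * (V * Matrix.diagonal b * star V)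
      = V * Matrix.diagonal (fun i => a i * b i) * star V := by
  have hVV : star V * V = 1 := u_star_mul hV
  have : Matrix.diagonal a * Matrix.diagonal b = Matrix.diagonal (fun i => a i * b i) := by
    rw [Matrix.diagonal_mul_diagonal]
  simp only [Matrix.mul_assoc]
  rw [← Matrix.mul_assoc (star V) V, hVV, Matrix.one_mul, ← Matrix.mul_assoc (Matrix.diagonal a),
    this]

lemma trace_conj_diag {V : Matrix d d ℂ} (hV : V ∈ Matrix.unitaryGroup d ℂ) (a : d → ℂ) :
    (V * Matrix.diagonal a * star V).trace = ∑ i, a i := by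
  rw [Matrix.trace_mul_cycle, u_star_mul hV, Matrix.one_mul, Matrix.trace_diagonal]

lemma trace_matFun (f : ℝ → ℝ) {A : Matrix d d ℂ} (hA : A.IsHermitian) :
    (matFun f A).trace = ∑ i, (f (hA.eigenvalues i) : ℂ) := by
  rw [matFun_of_isHermitian f hA, trace_conj_diag (hA.eigenvectorUnitary).2]

lemma posSemidef_conj_diag {V : Matrix d d ℂ} (e : d → ℝ) (he : ∀ i, 0 ≤ e i) :
    (V * Matrix.diagonal (fun i => (e i : ℂ)) * star V).PosSemidef := by
  have hD : (Matrix.diagonal (fun i => (e i : ℂ))).PosSemidef := by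
    refine Matrix.PosSemidef.diagonal (Pi.le_def.mpr fun i => ?_)
    simpa using Complex.zero_le_real.mpr (he i)
  have := hD.mul_mul_conjTranspose_same V
  rwa [Matrix.star_eq_conjTranspose]

lemma matFun_posSemidef (f : ℝ → ℝ) {A : Matrix d d ℂ} (hA : A.IsHermitian)
    (hf : ∀ i, 0 ≤ f (hA.eigenvalues i)) : (matFun f A).PosSemidef := by
  rw [matFun_of_isHermitian f hA]
  exact posSemidef_conj_diag _ hf

end SpectralTools

section PSDTrace

lemma trace_unitary_conj {V : Matrix d d ℂ} (hV : V ∈ Matrix.unitaryGroup d ℂ)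
    (M : Matrix d d ℂ) : (V * M * star V).trace = M.trace := by
  rw [Matrix.trace_mul_cycle, u_star_mul hV, Matrix.one_mul]

lemma trace_star_unitary_conj {V : Matrix d d ℂ} (hV : V ∈ Matrix.unitaryGroup d ℂ)
    (M : Matrix d d ℂ) : (star V * M * V).trace = M.trace := by
  rw [Matrix.trace_mul_cycle, u_mul_star hV, Matrix.one_mul]

lemma trace_eq_sum_eigenvalues {A : Matrix d d ℂ} (hA : A.IsHermitian) :
    A.trace = ∑ i, (hA.eigenvalues i : ℂ) := by
  conv_lhs => rw [spectral_decomp hA]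
  exact trace_conj_diag (hA.eigenvectorUnitary).2 _

lemma trace_psd_re_nonneg {M : Matrix d d ℂ} (hM : M.PosSemidef) : 0 ≤ M.trace.re := by
  rw [trace_eq_sum_eigenvalues hM.1, Complex.re_sum]
  refine Finset.sum_nonneg fun i _ => ?_
  rw [Complex.ofReal_re]
  exact hM.eigenvalues_nonneg i

lemma trace_mul_psd_re_nonneg {A B : Matrix d d ℂ} (hA : A.PosSemidef) (hB : B.PosSemidef) :
    0 ≤ ((A * B).trace).re := by
  obtain ⟨C, hC⟩ : ∃ C : Matrix d d ℂ, B = Cᴴ * C := by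
    open MatrixOrder in exact CStarAlgebra.nonneg_iff_eq_star_mul_self.mp hB.nonneg
  rw [hC, ← Matrix.mul_assoc, Matrix.trace_mul_cycle]
  exact trace_psd_re_nonneg (hA.mul_mul_conjTranspose_same C)

lemma psd_diag_entry_re {M : Matrix d d ℂ} (hM : M.PosSemidef) (j : d) : 0 ≤ (M j j).re := by
  have h := hM.dotProduct_mulVec_nonneg (Pi.single j 1)
  have h2 : dotProduct (star ((Pi.single j 1) : d → ℂ)) (M *ᵥ ((Pi.single j 1) : d → ℂ))
      = M j j := by
    rw [Matrix.mulVec_single]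
    have hst : star (Pi.single j (1:ℂ)) = (Pi.single j 1 : d → ℂ) := by
      funext i
      by_cases h : i = j
      · subst h; simp
      · simp [Pi.single_eq_of_ne h]
    rw [hst, single_dotProduct]
    simp
  rw [h2] at h
  exact (Complex.le_def.mp h).1

end PSDTrace

section ScalarIneq

/-- Jensen for subprobability weights. -/
lemma scalarJensen {c lam : d → ℝ} (hc : ∀ i, 0 ≤ c i) (hc1 : ∑ i, c i ≤ 1)
    (hlam : ∀ i, 0 ≤ lam i) {q : ℝ} (hq : 1 ≤ q) :
    (∑ i, c i * lam i) ^ q ≤ ∑ i, c i * lam i ^ q := by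
  set t := ∑ i, c i with ht
  have ht0 : 0 ≤ t := Finset.sum_nonneg fun i _ => hc i
  rcases eq_or_lt_of_le ht0 with h0 | hpos
  · have hall : ∀ i ∈ Finset.univ, c i = 0 :=
      (Finset.sum_eq_zero_iff_of_nonneg fun i _ => hc i).mp h0.symm
    have h1 : (∑ i, c i * lam i) = 0 :=
      Finset.sum_eq_zero fun i hi => by rw [hall i hi, zero_mul]
    have h2 : (∑ i, c i * lam i ^ q) = 0 :=
      Finset.sum_eq_zero fun i hi => by rw [hall i hi, zero_mul]
    rw [h1, h2, Real.zero_rpow (by positivity)]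
  · have hw : ∀ i ∈ Finset.univ, 0 ≤ c i / t := fun i _ => div_nonneg (hc i) ht0
    have hw1 : ∑ i, c i / t = 1 := by
      rw [← Finset.sum_div, ← ht, div_self hpos.ne']
    have hJ := Real.rpow_arith_mean_le_arith_mean_rpow Finset.univ (fun i => c i / t) lam hw hw1
      (fun i _ => hlam i) hq
    have hkey : (∑ i, c i * lam i) ^ q = t ^ q * (∑ i, c i / t * lam i) ^ q := by
      rw [← Real.mul_rpow ht0 (Finset.sum_nonneg fun i _ =>
        mul_nonneg (hw i (Finset.mem_univ i)) (hlam i))]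
      congr 1
      rw [Finset.mul_sum]
      refine Finset.sum_congr rfl fun i _ => ?_
      field_simp
    have hle : t ^ q * (∑ i, c i / t * lam i) ^ q ≤ t ^ q * ∑ i, c i / t * lam i ^ q :=
      mul_le_mul_of_nonneg_left hJ (Real.rpow_nonneg ht0 q)
    have heq2 : t ^ q * ∑ i, c i / t * lam i ^ q = (t ^ q * t⁻¹) * ∑ i, c i * lam i ^ q := by
      have h1 : ∑ i, c i / t * lam i ^ q = ∑ i, t⁻¹ * (c i * lam i ^ q) :=
        Finset.sum_congr rfl fun i _ => by rw [div_eq_inv_mul]; ring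
      rw [h1, ← Finset.mul_sum, ← mul_assoc]
    have hfac : t ^ q * t⁻¹ ≤ 1 := by
      have h1 : t ^ q ≤ t := by
        calc t ^ q ≤ t ^ (1:ℝ) :=
              Real.rpow_le_rpow_of_exponent_ge hpos hc1 hq
          _ = t := Real.rpow_one t
      calc t ^ q * t⁻¹ ≤ t * t⁻¹ := by
            exact mul_le_mul_of_nonneg_right h1 (inv_nonneg.mpr ht0)
        _ = 1 := mul_inv_cancel₀ hpos.ne'
    calc (∑ i, c i * lam i) ^ q = t ^ q * (∑ i, c i / t * lam i) ^ q := hkey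
      _ ≤ t ^ q * ∑ i, c i / t * lam i ^ q := hle
      _ = (t ^ q * t⁻¹) * ∑ i, c i * lam i ^ q := heq2
      _ ≤ 1 * ∑ i, c i * lam i ^ q := by
          refine mul_le_mul_of_nonneg_right hfac ?_
          exact Finset.sum_nonneg fun i _ => mul_nonneg (hc i) (Real.rpow_nonneg (hlam i) q)
      _ = ∑ i, c i * lam i ^ q := one_mul _

end ScalarIneq

section Holder

lemma trace_matFun_re (f : ℝ → ℝ) {A : Matrix d d ℂ} (hA : A.IsHermitian) :
    (matFun f A).trace.re = ∑ i, f (hA.eigenvalues i) := by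
  rw [trace_matFun f hA, Complex.re_sum]
  exact Finset.sum_congr rfl fun i _ => Complex.ofReal_re _

/-- Hölder inequality for traces of products of PSD matrices. -/
lemma trace_holder {A B : Matrix d d ℂ} (hA : A.PosSemidef) (hB : B.PosSemidef) {p q : ℝ}
    (hpq : Real.HolderConjugate p q) :
    ((A * B).trace).re ≤
      ((matRpow A p).trace.re) ^ p⁻¹ * ((matRpow B q).trace.re) ^ q⁻¹ := by
  set U : Matrix d d ℂ := (hA.1.eigenvectorUnitary : Matrix d d ℂ) with hUdef
  set V : Matrix d d ℂ := (hB.1.eigenvectorUnitary : Matrix d d ℂ) with hVdef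
  set lam := hA.1.eigenvalues with hlamdef
  set mu := hB.1.eigenvalues with hmudef
  have hUmem := (hA.1.eigenvectorUnitary).2
  have hVmem := (hB.1.eigenvectorUnitary).2
  have hUU : star U * U = 1 := u_star_mul hUmem
  have hUU' : U * star U = 1 := u_mul_star hUmem
  have hVV : star V * V = 1 := u_star_mul hVmem
  have hVV' : V * star V = 1 := u_mul_star hVmem
  set W : Matrix d d ℂ := star U * V with hWdef
  have hWmem : W ∈ Matrix.unitaryGroup d ℂ := mul_mem (Unitary.star_mem hUmem) hVmem
  have hWW' : W * star W = 1 := u_mul_star hWmem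
  have hWW : star W * W = 1 := u_star_mul hWmem
  set c : d → d → ℝ := fun i j => Complex.normSq (W i j) with hcdef
  have hc0 : ∀ i j, 0 ≤ c i j := fun i j => Complex.normSq_nonneg _
  have hmc : ∀ z : ℂ, z * star z = ((Complex.normSq z : ℝ) : ℂ) := fun z =>
    Complex.mul_conj z
  -- row and column sums of |W|² are 1
  have hrow : ∀ i, ∑ j, c i j = 1 := by
    intro i
    have h1 : (W * star W) i i = 1 := by rw [hWW']; simp
    have h2 : (W * star W) i i = ((∑ j, c i j : ℝ) : ℂ) := by
      rw [Matrix.mul_apply]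
      push_cast
      refine Finset.sum_congr rfl fun j _ => ?_
      rw [Matrix.star_apply]
      simpa using hmc (W i j)
    rw [h2] at h1
    exact_mod_cast h1
  have hcol : ∀ j, ∑ i, c i j = 1 := by
    intro j
    have h1 : (star W * W) j j = 1 := by rw [hWW]; simp
    have h2 : (star W * W) j j = ((∑ i, c i j : ℝ) : ℂ) := by
      rw [Matrix.mul_apply]
      push_cast
      refine Finset.sum_congr rfl fun i _ => ?_
      rw [Matrix.star_apply, mul_comm]
      simpa using hmc (W i j)
    rw [h2] at h1
    exact_mod_cast h1
  -- trace formula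
  have hAB : A * B = U * (Matrix.diagonal (fun i => (lam i : ℂ)) *
      (W * (Matrix.diagonal (fun j => (mu j : ℂ)) * star W))) * star U := by
    have hsw : star W = star V * U := by
      rw [hWdef, StarMul.star_mul, star_star]
    conv_lhs => rw [spectral_decomp hA.1, spectral_decomp hB.1]
    rw [← hUdef, ← hVdef, ← hlamdef, ← hmudef]
    rw [hsw, hWdef]
    have cUU' : ∀ M : Matrix d d ℂ, U * (star U * M) = M := fun M => by
      rw [← Matrix.mul_assoc, hUU', Matrix.one_mul]
    simp only [Matrix.mul_assoc, cUU', hUU', Matrix.mul_one]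
  have htr : ((A * B).trace).re = ∑ i, ∑ j, lam i * (mu j * c i j) := by
    rw [hAB, trace_unitary_conj hUmem]
    have h3 : ∀ i, (W * (Matrix.diagonal (fun j => (mu j : ℂ)) * star W)) i i
        = ((∑ j, mu j * c i j : ℝ) : ℂ) := by
      intro i
      rw [← Matrix.mul_assoc, Matrix.mul_apply]
      push_cast
      refine Finset.sum_congr rfl fun j _ => ?_
      rw [Matrix.mul_diagonal, Matrix.star_apply]
      calc W i j * (mu j : ℂ) * star (W i j)
          = (mu j : ℂ) * (W i j * star (W i j)) := by ring
        _ = (mu j : ℂ) * ((c i j : ℝ) : ℂ) := by rw [hmc]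
    have h4 : (Matrix.diagonal (fun i => (lam i : ℂ)) *
        (W * (Matrix.diagonal (fun j => (mu j : ℂ)) * star W))).trace
        = ((∑ i, lam i * ∑ j, mu j * c i j : ℝ) : ℂ) := by
      rw [Matrix.trace]
      push_cast
      refine Finset.sum_congr rfl fun i _ => ?_
      rw [Matrix.diag_apply, Matrix.diagonal_mul, h3 i]
      push_cast
      ring
    rw [h4, Complex.ofReal_re]
    refine Finset.sum_congr rfl fun i _ => ?_
    rw [Finset.mul_sum]
  -- Hölder on the doubly indexed sum
  have hp0 : (p : ℝ) ≠ 0 := hpq.pos.ne'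
  have hq0 : (q : ℝ) ≠ 0 := hpq.symm.pos.ne'
  set F : d × d → ℝ := fun x => lam x.1 * c x.1 x.2 ^ p⁻¹ with hFdef
  set G : d × d → ℝ := fun x => mu x.2 * c x.1 x.2 ^ q⁻¹ with hGdef
  have hF0 : ∀ x ∈ Finset.univ (α := d × d), 0 ≤ F x := fun x _ =>
    mul_nonneg (hA.eigenvalues_nonneg _) (Real.rpow_nonneg (hc0 _ _) _)
  have hG0 : ∀ x ∈ Finset.univ (α := d × d), 0 ≤ G x := fun x _ =>
    mul_nonneg (hB.eigenvalues_nonneg _) (Real.rpow_nonneg (hc0 _ _) _)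
  have hFG : ∀ x : d × d, F x * G x = lam x.1 * (mu x.2 * c x.1 x.2) := by
    intro x
    have : c x.1 x.2 ^ p⁻¹ * c x.1 x.2 ^ q⁻¹ = c x.1 x.2 := by
      rw [← Real.rpow_add' (hc0 _ _) (by rw [hpq.inv_add_inv_eq_one]; exact one_ne_zero),
        hpq.inv_add_inv_eq_one, Real.rpow_one]
    calc F x * G x = (lam x.1 * mu x.2) * (c x.1 x.2 ^ p⁻¹ * c x.1 x.2 ^ q⁻¹) := by ring
      _ = lam x.1 * (mu x.2 * c x.1 x.2) := by rw [this]; ring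
  have hFp : ∀ x : d × d, F x ^ p = lam x.1 ^ p * c x.1 x.2 := by
    intro x
    rw [hFdef]
    rw [Real.mul_rpow (hA.eigenvalues_nonneg _) (Real.rpow_nonneg (hc0 _ _) _)]
    congr 1
    rw [← Real.rpow_mul (hc0 _ _), inv_mul_cancel₀ hp0, Real.rpow_one]
  have hGq : ∀ x : d × d, G x ^ q = mu x.2 ^ q * c x.1 x.2 := by
    intro x
    rw [hGdef]
    rw [Real.mul_rpow (hB.eigenvalues_nonneg _) (Real.rpow_nonneg (hc0 _ _) _)]
    congr 1
    rw [← Real.rpow_mul (hc0 _ _), inv_mul_cancel₀ hq0, Real.rpow_one]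
  have hHold := Real.inner_le_Lp_mul_Lq_of_nonneg Finset.univ hpq hF0 hG0
  have hsum1 : ∑ x : d × d, F x * G x = ∑ i, ∑ j, lam i * (mu j * c i j) := by
    rw [Fintype.sum_prod_type]
    exact Finset.sum_congr rfl fun i _ => Finset.sum_congr rfl fun j _ => hFG (i, j)
  have hsum2 : ∑ x : d × d, F x ^ p = (matRpow A p).trace.re := by
    rw [matRpow, trace_matFun_re _ hA.1, Fintype.sum_prod_type]
    refine Finset.sum_congr rfl fun i _ => ?_
    have : ∑ j, F (i, j) ^ p = ∑ j, lam i ^ p * c i j :=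
      Finset.sum_congr rfl fun j _ => hFp (i, j)
    rw [this, ← Finset.mul_sum, hrow i, mul_one]
  have hsum3 : ∑ x : d × d, G x ^ q = (matRpow B q).trace.re := by
    rw [matRpow, trace_matFun_re _ hB.1, Fintype.sum_prod_type]
    rw [Finset.sum_comm]
    refine Finset.sum_congr rfl fun j _ => ?_
    have : ∑ i, G (i, j) ^ q = ∑ i, mu j ^ q * c i j :=
      Finset.sum_congr rfl fun i _ => hGq (i, j)
    rw [this, ← Finset.mul_sum, hcol j, mul_one]
  rw [htr, ← hsum1, ← one_div, ← one_div (q : ℝ)]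
  rw [← hsum2, ← hsum3]
  exact hHold

end Holder

section RpowTools

lemma matRpow_of_psd {A : Matrix d d ℂ} (hA : A.PosSemidef) (r : ℝ) :
    matRpow A r = (hA.1.eigenvectorUnitary : Matrix d d ℂ) *
      Matrix.diagonal (fun i => ((hA.1.eigenvalues i ^ r : ℝ) : ℂ)) *
      star (hA.1.eigenvectorUnitary : Matrix d d ℂ) :=
  matFun_of_isHermitian _ hA.1

lemma matRpow_isHermitian {A : Matrix d d ℂ} (hA : A.PosSemidef) (r : ℝ) :
    (matRpow A r).IsHermitian := by
  rw [matRpow_of_psd hA r]; exact isHermitian_conj_diag _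

lemma matRpow_posSemidef {A : Matrix d d ℂ} (hA : A.PosSemidef) (r : ℝ) :
    (matRpow A r).PosSemidef := by
  rw [matRpow_of_psd hA r]
  exact posSemidef_conj_diag _ (fun i => Real.rpow_nonneg (hA.eigenvalues_nonneg i) r)

lemma matRpow_mul_self {A : Matrix d d ℂ} (hA : A.PosSemidef) {r s : ℝ} (hrs : r + s ≠ 0) :
    matRpow A r * matRpow A s = matRpow A (r + s) := by
  rw [matRpow_of_psd hA r, matRpow_of_psd hA s, matRpow_of_psd hA (r + s),
    conj_diag_mul (hA.1.eigenvectorUnitary).2]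
  have hfun : (fun i => ((hA.1.eigenvalues i ^ r : ℝ) : ℂ) * ((hA.1.eigenvalues i ^ s : ℝ) : ℂ))
      = (fun i => ((hA.1.eigenvalues i ^ (r + s) : ℝ) : ℂ)) := by
    funext i
    rw [← Complex.ofReal_mul]
    exact congrArg _ (Real.rpow_add' (hA.eigenvalues_nonneg i) hrs).symm
  rw [hfun]

lemma matRpow_one_eq {A : Matrix d d ℂ} (hA : A.PosSemidef) : matRpow A 1 = A := by
  rw [matRpow_of_psd hA 1]
  conv_rhs => rw [spectral_decomp hA.1]
  have hfun : (fun i => ((hA.1.eigenvalues i ^ (1:ℝ) : ℝ) : ℂ))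
      = (fun i => ((hA.1.eigenvalues i : ℝ) : ℂ)) := by
    funext i
    rw [Real.rpow_one]
  rw [hfun]

lemma matRpow_half_sq {A : Matrix d d ℂ} (hA : A.PosSemidef) :
    matRpow A 2⁻¹ * matRpow A 2⁻¹ = A := by
  rw [matRpow_mul_self hA (by norm_num)]
  norm_num
  exact matRpow_one_eq hA

end RpowTools

section HP

/-- Jensen-type trace inequality (Hansen–Pedersen style) for a contraction `0 ≤ T ≤ 1`. -/
lemma trace_rpow_contract {Xm T : Matrix d d ℂ} (hX : Xm.PosSemidef) (hT : T.PosSemidef)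
    (hT1 : (1 - T).PosSemidef) {q : ℝ} (hq : 1 ≤ q) :
    (matRpow (matRpow T 2⁻¹ * Xm * matRpow T 2⁻¹) q).trace.re
      ≤ ((matRpow Xm q) * T).trace.re := by
  have hmc : ∀ z : ℂ, z * star z = ((Complex.normSq z : ℝ) : ℂ) := fun z => Complex.mul_conj z
  set R := matRpow T 2⁻¹ with hRdef
  have hRpsd : R.PosSemidef := matRpow_posSemidef hT _
  have hsR : star R = R := hRpsd.1
  have hR2 : R * R = T := matRpow_half_sq hT
  have hC : (R * Xm * R).PosSemidef := by
    have h := hX.mul_mul_conjTranspose_same R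
    rwa [show Rᴴ = R from hRpsd.1] at h
  set C := R * Xm * R with hCdef
  set V : Matrix d d ℂ := (hC.1.eigenvectorUnitary : Matrix d d ℂ) with hVdef
  set U : Matrix d d ℂ := (hX.1.eigenvectorUnitary : Matrix d d ℂ) with hUdef
  have hVmem := (hC.1.eigenvectorUnitary).2
  have hUmem := (hX.1.eigenvectorUnitary).2
  have hVV : star V * V = 1 := u_star_mul hVmem
  have hVV' : V * star V = 1 := u_mul_star hVmem
  have hUU : star U * U = 1 := u_star_mul hUmem
  have hUU' : U * star U = 1 := u_mul_star hUmem
  set Z : Matrix d d ℂ := star U * (R * V) with hZdef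
  have hZs : star Z = star V * (R * U) := by
    rw [hZdef, StarMul.star_mul, StarMul.star_mul, star_star, hsR, Matrix.mul_assoc]
  set cc : d → d → ℝ := fun i j => Complex.normSq (Z i j) with hccdef
  have hcc0 : ∀ i j, 0 ≤ cc i j := fun i j => Complex.normSq_nonneg _
  -- generic conjugation identity
  have hgen : ∀ e : d → ℝ,
      star V * (R * (U * Matrix.diagonal (fun i => (e i : ℂ)) * star U) * R) * V
        = star Z * Matrix.diagonal (fun i => (e i : ℂ)) * Z := by
    intro e
    rw [hZs, hZdef]
    simp only [Matrix.mul_assoc]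
  -- diagonal entries of conjugated diagonal matrices
  have hdiag_entry : ∀ (e : d → ℝ) (j : d),
      ((star Z * Matrix.diagonal (fun i => (e i : ℂ)) * Z) j j).re = ∑ i, e i * cc i j := by
    intro e j
    rw [Matrix.mul_apply, Complex.re_sum]
    refine Finset.sum_congr rfl fun i _ => ?_
    rw [Matrix.mul_diagonal, Matrix.star_apply]
    have h : star (Z i j) * (e i : ℂ) * Z i j = (e i : ℂ) * ((cc i j : ℝ) : ℂ) := by
      calc star (Z i j) * (e i : ℂ) * Z i j = (e i : ℂ) * (Z i j * star (Z i j)) := by ring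
        _ = (e i : ℂ) * ((cc i j : ℝ) : ℂ) := by rw [hmc]
    rw [h, ← Complex.ofReal_mul, Complex.ofReal_re]
  have htrace_diag : ∀ e : d → ℝ,
      ((star Z * Matrix.diagonal (fun i => (e i : ℂ)) * Z).trace).re
        = ∑ j, ∑ i, e i * cc i j := by
    intro e
    rw [Matrix.trace, Complex.re_sum]
    exact Finset.sum_congr rfl fun j _ => hdiag_entry e j
  -- μ_j = Σ_i λ_i c_{ij}
  have hDmu : Matrix.diagonal (fun j => (hC.1.eigenvalues j : ℂ)) = star V * C * V := by
    conv_rhs => rw [spectral_decomp hC.1]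
    rw [← hVdef]
    have cVV : ∀ M : Matrix d d ℂ, star V * (V * M) = M := fun M => by
      rw [← Matrix.mul_assoc, hVV, Matrix.one_mul]
    simp only [Matrix.mul_assoc, cVV, hVV, Matrix.mul_one]
  have hCX : star V * C * V
      = star Z * Matrix.diagonal (fun i => (hX.1.eigenvalues i : ℂ)) * Z := by
    rw [hCdef]
    conv_lhs => rw [spectral_decomp hX.1]
    exact hgen _
  have hmuj : ∀ j, hC.1.eigenvalues j = ∑ i, hX.1.eigenvalues i * cc i j := by
    intro j
    have h := congrArg (fun M => (M j j).re) (hDmu.trans hCX)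
    simpa [Matrix.diagonal_apply_eq, Complex.ofReal_re, hdiag_entry] using h
  -- column sums at most one
  have hccol : ∀ j, ∑ i, cc i j ≤ 1 := by
    intro j
    have hZZ : star Z * Z = star V * T * V := by
      rw [hZs, hZdef, ← hR2]
      have cUU : ∀ M : Matrix d d ℂ, U * (star U * M) = M := fun M => by
        rw [← Matrix.mul_assoc, hUU', Matrix.one_mul]
      simp only [Matrix.mul_assoc, cUU]
    have h1 : ((star Z * Z) j j).re = ∑ i, cc i j := by
      rw [Matrix.mul_apply, Complex.re_sum]
      refine Finset.sum_congr rfl fun i _ => ?_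
      rw [Matrix.star_apply]
      have : star (Z i j) * Z i j = ((cc i j : ℝ) : ℂ) := by rw [mul_comm]; exact hmc _
      rw [this, Complex.ofReal_re]
    have h2 : ((star V * (1 - T) * V) j j).re = 1 - ((star V * T * V) j j).re := by
      have hexp : star V * (1 - T) * V = 1 - star V * T * V := by
        rw [Matrix.mul_sub, Matrix.mul_one, Matrix.sub_mul, hVV]
      rw [hexp]
      have : ((1 : Matrix d d ℂ) - star V * T * V) j j
          = (1 : Matrix d d ℂ) j j - (star V * T * V) j j := rfl
      rw [this, Matrix.one_apply_eq, Complex.sub_re, Complex.one_re]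
    have h3 : 0 ≤ ((star V * (1 - T) * V) j j).re := by
      have hpsd := hT1.conjTranspose_mul_mul_same V
      rw [show Vᴴ = star V from rfl] at hpsd
      exact psd_diag_entry_re hpsd j
    rw [h2] at h3
    calc ∑ i, cc i j = ((star Z * Z) j j).re := h1.symm
      _ = ((star V * T * V) j j).re := by rw [hZZ]
      _ ≤ 1 := by linarith
  -- assemble
  have hLHS : (matRpow C q).trace.re = ∑ j, hC.1.eigenvalues j ^ q :=
    trace_matFun_re _ hC.1
  have hRHS : ((matRpow Xm q) * T).trace.re
      = ∑ j, ∑ i, hX.1.eigenvalues i ^ q * cc i j := by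
    have hstep : matRpow Xm q * T = matRpow Xm q * R * R := by
      rw [Matrix.mul_assoc, hR2]
    rw [hstep, Matrix.trace_mul_cycle]
    rw [← trace_star_unitary_conj hVmem (R * matRpow Xm q * R)]
    have : star V * (R * matRpow Xm q * R) * V
        = star Z * Matrix.diagonal (fun i => ((hX.1.eigenvalues i ^ q : ℝ) : ℂ)) * Z := by
      rw [matRpow_of_psd hX]
      exact hgen (fun i => hX.1.eigenvalues i ^ q)
    rw [this, htrace_diag]
  rw [hLHS, hRHS]
  refine Finset.sum_le_sum fun j _ => ?_
  have hJ := scalarJensen (c := fun i => cc i j) (lam := hX.1.eigenvalues)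
    (fun i => hcc0 i j) (hccol j) (fun i => hX.eigenvalues_nonneg i) hq
  have hrw : ∑ i, cc i j * hX.1.eigenvalues i = hC.1.eigenvalues j := by
    rw [hmuj j]
    exact Finset.sum_congr rfl fun i _ => mul_comm _ _
  rw [hrw] at hJ
  refine le_trans hJ (le_of_eq ?_)
  exact Finset.sum_congr rfl fun i _ => mul_comm _ _

end HP

section Swap

lemma trace_rpow_swap_le (M : Matrix d d ℂ) {q : ℝ} (hq : 0 < q) :
    (matRpow (star M * M) q).trace.re ≤ (matRpow (M * star M) q).trace.re := by
  have hC : (star M * M).PosSemidef := by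
    rw [Matrix.star_eq_conjTranspose]; exact Matrix.posSemidef_conjTranspose_mul_self M
  have hP : (M * star M).PosSemidef := by
    rw [Matrix.star_eq_conjTranspose]; exact Matrix.posSemidef_self_mul_conjTranspose M
  set V : Matrix d d ℂ := (hC.1.eigenvectorUnitary : Matrix d d ℂ) with hVdef
  set mu := hC.1.eigenvalues with hmudef
  have hVmem := (hC.1.eigenvectorUnitary).2
  have hVV : star V * V = 1 := u_star_mul hVmem
  have hmu0 : ∀ j, 0 ≤ mu j := fun j => hC.eigenvalues_nonneg j
  have hCV : (star M * M) * V = V * Matrix.diagonal (fun j => (mu j : ℂ)) := by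
    conv_lhs => rw [spectral_decomp hC.1]
    rw [← hVdef, ← hmudef]
    simp only [Matrix.mul_assoc, hVV, Matrix.mul_one]
  set g : d → ℝ := fun j => if mu j = 0 then 0 else (Real.sqrt (mu j))⁻¹ with hgdef
  set S : Matrix d d ℂ := M * V * Matrix.diagonal (fun j => (g j : ℂ)) with hSdef
  set E : Matrix d d ℂ := Matrix.diagonal (fun j => if mu j = 0 then (0 : ℂ) else 1) with hEdef
  -- star S * S = E
  have h0 : star S * S = Matrix.diagonal (fun j => (g j : ℂ)) *
      (star V * ((star M * M) * V)) * Matrix.diagonal (fun j => (g j : ℂ)) := by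
    rw [hSdef]
    simp only [StarMul.star_mul, star_diag_coe g, Matrix.mul_assoc]
  have h1 : star S * S = E := by
    rw [h0, hCV, ← Matrix.mul_assoc (star V), hVV, Matrix.one_mul,
      Matrix.diagonal_mul_diagonal, Matrix.diagonal_mul_diagonal, hEdef]
    refine congrArg Matrix.diagonal (funext fun j => ?_)
    by_cases hj : mu j = 0
    · simp [hgdef, hj]
    · have hpos : 0 < mu j := lt_of_le_of_ne (hmu0 j) (Ne.symm hj)
      have hs : Real.sqrt (mu j) ≠ 0 := ne_of_gt (Real.sqrt_pos.mpr hpos)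
      have hss : Real.sqrt (mu j) * Real.sqrt (mu j) = mu j := Real.mul_self_sqrt (hmu0 j)
      simp only [hgdef, if_neg hj]
      rw [← Complex.ofReal_mul, ← Complex.ofReal_mul]
      have : (Real.sqrt (mu j))⁻¹ * mu j * (Real.sqrt (mu j))⁻¹ = 1 := by
        rw [mul_comm _ (mu j), mul_assoc, ← mul_inv, hss, mul_inv_cancel₀ hpos.ne']
      rw [this, Complex.ofReal_one]
  -- (M * star M) * S = S * D_mu
  have hDcomm : Matrix.diagonal (fun j => (mu j : ℂ)) * Matrix.diagonal (fun j => (g j : ℂ))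
      = Matrix.diagonal (fun j => (g j : ℂ)) * Matrix.diagonal (fun j => (mu j : ℂ)) := by
    rw [Matrix.diagonal_mul_diagonal, Matrix.diagonal_mul_diagonal]
    refine congrArg Matrix.diagonal (funext fun j => ?_)
    ring
  have h2 : (M * star M) * S = S * Matrix.diagonal (fun j => (mu j : ℂ)) := by
    calc (M * star M) * S
        = M * (((star M * M) * V) * Matrix.diagonal (fun j => (g j : ℂ))) := by
          rw [hSdef]; simp only [Matrix.mul_assoc]
      _ = M * ((V * Matrix.diagonal (fun j => (mu j : ℂ))) * Matrix.diagonal (fun j => (g j : ℂ))) := by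
          rw [hCV]
      _ = M * (V * (Matrix.diagonal (fun j => (mu j : ℂ)) * Matrix.diagonal (fun j => (g j : ℂ)))) := by
          simp only [Matrix.mul_assoc]
      _ = M * (V * (Matrix.diagonal (fun j => (g j : ℂ)) * Matrix.diagonal (fun j => (mu j : ℂ)))) := by
          rw [hDcomm]
      _ = S * Matrix.diagonal (fun j => (mu j : ℂ)) := by
          rw [hSdef]; simp only [Matrix.mul_assoc]
  -- matRpow (M * star M) q * S = S * D_{mu^q}
  set Up : Matrix d d ℂ := (hP.1.eigenvectorUnitary : Matrix d d ℂ) with hUpdef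
  have hUpmem := (hP.1.eigenvectorUnitary).2
  have hUpUp : star Up * Up = 1 := u_star_mul hUpmem
  have hUpUp' : Up * star Up = 1 := u_mul_star hUpmem
  have cUp' : ∀ N : Matrix d d ℂ, Up * (star Up * N) = N := fun N => by
    rw [← Matrix.mul_assoc, hUpUp', Matrix.one_mul]
  have cUp : ∀ N : Matrix d d ℂ, star Up * (Up * N) = N := fun N => by
    rw [← Matrix.mul_assoc, hUpUp, Matrix.one_mul]
  have hPs : star Up * (M * star M) = Matrix.diagonal (fun i => (hP.1.eigenvalues i : ℂ)) * star Up := by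
    conv_lhs => rw [spectral_decomp hP.1]
    rw [← hUpdef]
    simp only [Matrix.mul_assoc, cUp]
  have hInter : Matrix.diagonal (fun i => (hP.1.eigenvalues i : ℂ)) * (star Up * S)
      = (star Up * S) * Matrix.diagonal (fun j => (mu j : ℂ)) := by
    calc Matrix.diagonal (fun i => (hP.1.eigenvalues i : ℂ)) * (star Up * S)
        = (star Up * (M * star M)) * S := by rw [hPs]; simp only [Matrix.mul_assoc]
      _ = star Up * ((M * star M) * S) := by simp only [Matrix.mul_assoc]
      _ = star Up * (S * Matrix.diagonal (fun j => (mu j : ℂ))) := by rw [h2]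
      _ = (star Up * S) * Matrix.diagonal (fun j => (mu j : ℂ)) := by
          simp only [Matrix.mul_assoc]
  have hIq : Matrix.diagonal (fun i => ((hP.1.eigenvalues i ^ q : ℝ) : ℂ)) * (star Up * S)
      = (star Up * S) * Matrix.diagonal (fun j => ((mu j ^ q : ℝ) : ℂ)) :=
    intertwine (fun t => t ^ q) hInter
  have h3 : matRpow (M * star M) q * S
      = S * Matrix.diagonal (fun j => ((mu j ^ q : ℝ) : ℂ)) := by
    calc matRpow (M * star M) q * S
        = Up * (Matrix.diagonal (fun i => ((hP.1.eigenvalues i ^ q : ℝ) : ℂ)) * (star Up * S)) := by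
          rw [matRpow_of_psd hP q, ← hUpdef]; simp only [Matrix.mul_assoc]
      _ = Up * ((star Up * S) * Matrix.diagonal (fun j => ((mu j ^ q : ℝ) : ℂ))) := by rw [hIq]
      _ = S * Matrix.diagonal (fun j => ((mu j ^ q : ℝ) : ℂ)) := by
          rw [← Matrix.mul_assoc, ← Matrix.mul_assoc, hUpUp', Matrix.one_mul]
  -- trace identity
  have hLHS : (matRpow (star M * M) q).trace.re = ∑ j, mu j ^ q :=
    trace_matFun_re _ hC.1
  have ha : matRpow (M * star M) q * (S * star S)
      = (S * Matrix.diagonal (fun j => ((mu j ^ q : ℝ) : ℂ))) * star S := by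
    rw [← Matrix.mul_assoc, h3]
  have h5 : ((matRpow (M * star M) q * (S * star S)).trace).re = ∑ j, mu j ^ q := by
    rw [ha, Matrix.trace_mul_cycle, h1, hEdef, Matrix.diagonal_mul_diagonal,
      Matrix.trace_diagonal, Complex.re_sum]
    refine Finset.sum_congr rfl fun j _ => ?_
    by_cases hj : mu j = 0
    · simp [hj, Real.zero_rpow hq.ne']
    · simp [hj]
  -- projection facts
  have hK : (S * star S).PosSemidef := by
    rw [Matrix.star_eq_conjTranspose]; exact Matrix.posSemidef_self_mul_conjTranspose S
  have hgE : Matrix.diagonal (fun j => (g j : ℂ)) * E = Matrix.diagonal (fun j => (g j : ℂ)) := by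
    rw [hEdef, Matrix.diagonal_mul_diagonal]
    refine congrArg Matrix.diagonal (funext fun j => ?_)
    by_cases hj : mu j = 0
    · simp [hgdef, hj]
    · simp [hj]
  have hSE : S * E = S := by
    rw [hSdef, Matrix.mul_assoc (M * V), hgE]
  have hK2 : (S * star S) * (S * star S) = S * star S := by
    calc (S * star S) * (S * star S) = S * ((star S * S) * star S) := by
          simp only [Matrix.mul_assoc]
      _ = S * (E * star S) := by rw [h1]
      _ = (S * E) * star S := by rw [← Matrix.mul_assoc]
      _ = S * star S := by rw [hSE]
  have h1mK : (1 - S * star S).PosSemidef := by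
    have hidem : (1 - S * star S)ᴴ * (1 - S * star S) = 1 - S * star S := by
      rw [Matrix.conjTranspose_sub, Matrix.conjTranspose_one, hK.1,
        Matrix.sub_mul, Matrix.one_mul, Matrix.mul_sub, Matrix.mul_one, hK2]
      abel
    have hpsd := Matrix.posSemidef_conjTranspose_mul_self (1 - S * star S)
    rwa [hidem] at hpsd
  have hq_psd : (matRpow (M * star M) q).PosSemidef := matRpow_posSemidef hP q
  have hnn : 0 ≤ ((matRpow (M * star M) q * (1 - S * star S)).trace).re :=
    trace_mul_psd_re_nonneg hq_psd h1mK
  have hsplit : (matRpow (M * star M) q).trace.re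
      = ((matRpow (M * star M) q * (S * star S)).trace).re
        + ((matRpow (M * star M) q * (1 - S * star S)).trace).re := by
    have hmulsplit : matRpow (M * star M) q * (S * star S)
        + matRpow (M * star M) q * (1 - S * star S) = matRpow (M * star M) q := by
      rw [← Matrix.mul_add]
      simp
    conv_lhs => rw [← hmulsplit]
    rw [Matrix.trace_add, Complex.add_re]
  rw [hLHS]
  rw [← h5]
  linarith

/-- Nonzero spectra of `M* M` and `M M*` agree: equality of rpow traces. -/
lemma trace_rpow_swap (M : Matrix d d ℂ) {q : ℝ} (hq : 0 < q) :
    (matRpow (star M * M) q).trace.re = (matRpow (M * star M) q).trace.re := by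
  refine le_antisymm (trace_rpow_swap_le M hq) ?_
  have h := trace_rpow_swap_le (star M) hq
  rwa [star_star] at h

end Swap

section Key

/-- The key single-state inequality: `Tr[Tρ] ≤ Q̃_p(ρ‖σ)^{1/p} (Tr[Tσ])^{1/q}`. -/
lemma key_ineq {ρ σ T : Matrix d d ℂ} (hρ : ρ.PosSemidef) (hσ : σ.PosSemidef)
    (hT : T.PosSemidef) (hT1 : (1 - T).PosSemidef) (hsupp : suppLE ρ σ) {p q : ℝ}
    (hpq : Real.HolderConjugate p q) :
    ((T * ρ).trace).re ≤
      ((matRpow (matRpow σ ((1 - p) / (2 * p)) * ρ * matRpow σ ((1 - p) / (2 * p))) p).trace.re)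
          ^ p⁻¹
        * (((T * σ).trace).re) ^ q⁻¹ := by
  have hp1 : 1 < p := hpq.lt
  have hp0 : (0:ℝ) < p := hpq.pos
  have hq1 : 1 ≤ q := hpq.symm.lt.le
  have hq0 : (0:ℝ) < q := hpq.symm.pos
  set lam := hσ.1.eigenvalues with hlamdef
  set U : Matrix d d ℂ := (hσ.1.eigenvectorUnitary : Matrix d d ℂ) with hUdef
  have hUmem := (hσ.1.eigenvectorUnitary).2
  set s' : ℝ := (1 - p) / (2 * p) with hs'def
  set sp : ℝ := (p - 1) / (2 * p) with hspdef
  have hs'0 : s' ≠ 0 := by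
    rw [hs'def]
    refine div_ne_zero ?_ (by positivity)
    intro h
    have : p = 1 := by linarith [sub_eq_zero.mp h]
    linarith
  have hsp0 : sp ≠ 0 := by
    rw [hspdef]
    refine div_ne_zero ?_ (by positivity)
    intro h
    have : p = 1 := by linarith [sub_eq_zero.mp h]
    linarith
  have hs'sp : s' + sp = 0 := by rw [hs'def, hspdef]; ring
  have hsps' : sp + s' = 0 := by rw [hspdef, hs'def]; ring
  set ind : d → ℝ := fun i => if lam i = 0 then 0 else 1 with hinddef
  set Pi : Matrix d d ℂ := U * Matrix.diagonal (fun i => (ind i : ℂ)) * star U with hPidef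
  -- product of powers with opposite exponents gives the support projection
  have hprod : ∀ a b : ℝ, a + b = 0 → a ≠ 0 → b ≠ 0 →
      (fun i => ((lam i ^ a : ℝ) : ℂ) * ((lam i ^ b : ℝ) : ℂ)) = fun i => (ind i : ℂ) := by
    intro a b hab ha hb
    funext i
    rw [← Complex.ofReal_mul]
    by_cases hl : lam i = 0
    · rw [hl, Real.zero_rpow ha, Real.zero_rpow hb, hinddef]
      simp [hl]
    · have hlpos : 0 < lam i := lt_of_le_of_ne (hσ.eigenvalues_nonneg i) (Ne.symm hl)
      rw [← Real.rpow_add hlpos, hab, Real.rpow_zero, hinddef]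
      simp [hl]
  set N := matRpow σ s' with hNdef
  set G := matRpow σ sp with hGdef
  have hNG : N * G = Pi := by
    rw [hNdef, hGdef, matRpow_of_psd hσ, matRpow_of_psd hσ, conj_diag_mul hUmem, hPidef,
      hprod s' sp hs'sp hs'0 hsp0]
  have hGN : G * N = Pi := by
    rw [hNdef, hGdef, matRpow_of_psd hσ, matRpow_of_psd hσ, conj_diag_mul hUmem, hPidef,
      hprod sp s' hsps' hsp0 hs'0]
  have hPiσ : Pi * σ = σ := by
    rw [hPidef]
    conv_lhs => rw [spectral_decomp hσ.1]
    rw [conj_diag_mul hUmem]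
    have hfun : (fun i => (ind i : ℂ) * (lam i : ℂ)) = fun i => (lam i : ℂ) := by
      funext i
      by_cases hl : lam i = 0
      · rw [hl]; simp
      · rw [hinddef]; simp [hl]
    rw [hfun]
    exact (spectral_decomp hσ.1).symm
  -- the support projection fixes ρ
  have hPiρ : Pi * ρ = ρ := by
    have hrange : ∀ w ∈ LinearMap.range (Matrix.toLin' σ), Pi *ᵥ w = w := by
      rintro w ⟨v, rfl⟩
      rw [Matrix.toLin'_apply, Matrix.mulVec_mulVec, hPiσ]
    refine Matrix.toLin'.injective (LinearMap.ext fun v => ?_)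
    rw [Matrix.toLin'_apply, Matrix.toLin'_apply, ← Matrix.mulVec_mulVec]
    refine hrange _ (hsupp ?_)
    rw [show ρ *ᵥ v = Matrix.toLin' ρ v from (Matrix.toLin'_apply ρ v).symm]
    exact LinearMap.mem_range_self _ v
  have hPiH : Pi.IsHermitian := by rw [hPidef]; exact isHermitian_conj_diag _
  have hρPi : ρ * Pi = ρ := by
    have h1 : (Piᴴ * ρᴴ)ᴴ = ρ * Pi := by
      rw [Matrix.conjTranspose_mul, Matrix.conjTranspose_conjTranspose,
        Matrix.conjTranspose_conjTranspose]
    rw [← h1, hPiH.eq, hρ.1.eq, hPiρ, hρ.1]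
  -- the two PSD factors
  have hNH : N.IsHermitian := matRpow_isHermitian hσ s'
  have hGH : G.IsHermitian := matRpow_isHermitian hσ sp
  have hA : (N * ρ * N).PosSemidef := by
    have h := hρ.mul_mul_conjTranspose_same N
    rwa [hNH.eq] at h
  have hB : (G * T * G).PosSemidef := by
    have h := hT.mul_mul_conjTranspose_same G
    rwa [hGH.eq] at h
  -- trace identity Tr[Tρ] = Tr[A B]
  have cNG : ∀ X : Matrix d d ℂ, N * (G * X) = Pi * X := fun X => by
    rw [← Matrix.mul_assoc, hNG]
  have cρPi : ∀ Y : Matrix d d ℂ, ρ * (Pi * Y) = ρ * Y := fun Y => by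
    rw [← Matrix.mul_assoc, hρPi]
  have htr : (((N * ρ * N) * (G * T * G)).trace) = ((T * ρ).trace) := by
    have hAB : (N * ρ * N) * (G * T * G) = N * (ρ * (Pi * (T * G))) := by
      simp only [Matrix.mul_assoc, cNG]
    rw [hAB, Matrix.trace_mul_comm N (ρ * (Pi * (T * G)))]
    have h2 : ρ * (Pi * (T * G)) * N = ρ * (T * Pi) := by
      calc ρ * (Pi * (T * G)) * N = ρ * (T * (G * N)) := by
            simp only [Matrix.mul_assoc, cρPi]
        _ = ρ * (T * Pi) := by rw [hGN]
    rw [h2, Matrix.trace_mul_comm ρ (T * Pi), Matrix.mul_assoc, hPiρ]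
  -- Hölder
  have hHold := trace_holder hA hB hpq
  rw [htr] at hHold
  -- bound the B factor: Tr[(GTG)^q] ≤ Tr[Tσ]
  have hBle : (matRpow (G * T * G) q).trace.re ≤ ((T * σ).trace).re := by
    have hRR : matRpow T 2⁻¹ * matRpow T 2⁻¹ = T := matRpow_half_sq hT
    have hsRT : star (matRpow T 2⁻¹) = matRpow T 2⁻¹ := (matRpow_isHermitian hT _).eq
    have hsG : star G = G := hGH.eq
    have hGG : G * G = matRpow σ (sp + sp) := by
      rw [hGdef]; exact matRpow_mul_self hσ (by
        intro h
        exact hsp0 (by linarith [h]))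
    set Mm : Matrix d d ℂ := matRpow T 2⁻¹ * G with hMmdef
    have hsMm : star Mm = G * matRpow T 2⁻¹ := by
      rw [hMmdef, StarMul.star_mul, hsRT, hsG]
    have hMsM : star Mm * Mm = G * T * G := by
      rw [hsMm, hMmdef]
      calc G * matRpow T 2⁻¹ * (matRpow T 2⁻¹ * G)
          = G * (matRpow T 2⁻¹ * matRpow T 2⁻¹ * G) := by simp only [Matrix.mul_assoc]
        _ = G * (T * G) := by rw [hRR]
        _ = G * T * G := by rw [Matrix.mul_assoc]
    have hMMs : Mm * star Mm = matRpow T 2⁻¹ * matRpow σ (sp + sp) * matRpow T 2⁻¹ := by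
      rw [hsMm, hMmdef]
      calc matRpow T 2⁻¹ * G * (G * matRpow T 2⁻¹)
          = matRpow T 2⁻¹ * (G * G * matRpow T 2⁻¹) := by simp only [Matrix.mul_assoc]
        _ = matRpow T 2⁻¹ * (matRpow σ (sp + sp) * matRpow T 2⁻¹) := by rw [hGG]
        _ = _ := by rw [Matrix.mul_assoc]
    have hswap := trace_rpow_swap Mm hq0
    rw [hMsM, hMMs] at hswap
    have hXpsd : (matRpow σ (sp + sp)).PosSemidef := matRpow_posSemidef hσ _
    have hHP := trace_rpow_contract hXpsd hT hT1 hq1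
    -- (matRpow σ (sp+sp))^q = σ
    have hfun : (fun i => (((lam i ^ (sp + sp) : ℝ) ^ q : ℝ) : ℂ))
        = fun i => ((lam i : ℝ) : ℂ) := by
      funext i
      have h1 : (lam i ^ (sp + sp)) ^ q = lam i ^ ((sp + sp) * q) :=
        (Real.rpow_mul (hσ.eigenvalues_nonneg i) _ _).symm
      have h2 : (sp + sp) * q = 1 := by
        have hqe : q = p / (p - 1) :=
          (Real.holderConjugate_iff_eq_conjExponent hp1).mp hpq
        have hp1' : p - 1 ≠ 0 := sub_ne_zero.mpr (ne_of_gt hp1)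
        have hpne : p ≠ 0 := ne_of_gt hp0
        rw [hspdef, hqe]
        field_simp
        ring
      rw [h1, h2, Real.rpow_one]
    have hXq : matRpow (matRpow σ (sp + sp)) q = σ := by
      rw [matRpow_of_psd hσ (sp + sp)]
      refine Eq.trans (matFun_conj (fun t => t ^ q) hUmem (fun i => lam i ^ (sp + sp))) ?_
      refine Eq.trans (congrArg (fun Dm => (hσ.1.eigenvectorUnitary : Matrix d d ℂ) *
        Matrix.diagonal Dm * star (hσ.1.eigenvectorUnitary : Matrix d d ℂ)) hfun) ?_
      exact (spectral_decomp hσ.1).symm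
    rw [hXq] at hHP
    calc (matRpow (G * T * G) q).trace.re
        = (matRpow (matRpow T 2⁻¹ * matRpow σ (sp + sp) * matRpow T 2⁻¹) q).trace.re := hswap
      _ ≤ ((σ * T).trace).re := hHP
      _ = ((T * σ).trace).re := by rw [Matrix.trace_mul_comm]
  -- combine
  refine le_trans hHold ?_
  refine mul_le_mul_of_nonneg_left ?_ (Real.rpow_nonneg ?_ _)
  · exact Real.rpow_le_rpow (trace_psd_re_nonneg (matRpow_posSemidef hB q)) hBle
      (inv_pos.mpr hq0).le
  · exact trace_psd_re_nonneg (matRpow_posSemidef hA p)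

end Key

section Helpers

lemma sandQ_psd {ρ σ : Matrix d d ℂ} (hρ : ρ.PosSemidef) (hσ : σ.PosSemidef) (r : ℝ) :
    (matRpow σ r * ρ * matRpow σ r).PosSemidef := by
  have h := hρ.mul_mul_conjTranspose_same (matRpow σ r)
  rwa [(matRpow_isHermitian hσ r).eq] at h

lemma povm_trace_le_one {T ρ : Matrix d d ℂ} (hT1 : (1 - T).PosSemidef) (hρ : ρ.PosSemidef)
    (htr : ρ.trace = 1) : ((T * ρ).trace).re ≤ 1 := by
  have h1 := trace_mul_psd_re_nonneg hT1 hρ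
  have h2 : ((1 - T) * ρ).trace = ρ.trace - (T * ρ).trace := by
    rw [Matrix.sub_mul, Matrix.one_mul, Matrix.trace_sub]
  rw [h2, htr, Complex.sub_re, Complex.one_re] at h1
  linarith

end Helpers


end Development

/-- **Bound on type II errors between a CQ channel and a set of free CQ channels**
(Lemma 3.5): for `α > 1`, `ε ∈ [0,1)`, a set `𝓕` of free CQ channels satisfying Axioms CQ1,
CQ2, CQ4, and a CQ channel `Φ`,
`−log β_ε(Φ‖𝓕) ≤ D̃_α(Φ‖𝓕) + (α/(α−1)) log(1/(1−ε))`. -/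
theorem bound_on_typeII_errors_against_free_set
    {X d : Type*} [Fintype X] [Nonempty X] [Fintype d] [DecidableEq d]
    (α ε : ℝ) (hα : 1 < α) (hε0 : 0 ≤ ε) (hε1 : ε < 1)
    (S : Set (X → Matrix d d ℂ)) (hS : ∀ Φf ∈ S, IsCQChannel Φf)
    (hCQ1 : SetCQ1 S) (hCQ2 : IsCompact S) (hCQ4 : Convex ℝ S)
    (Φ : X → Matrix d d ℂ) (hΦ : IsCQChannel Φ) :
    ((-Real.log (typeIIErrSet ε Φ S) : ℝ) : EReal) ≤
      chRenyiDivSet α Φ S + (((α / (α - 1)) * Real.log (1 / (1 - ε)) : ℝ) : EReal) := by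
  have hα0 : (0:ℝ) < α := lt_trans one_pos hα
  have hαne : α ≠ 0 := ne_of_gt hα0
  have hα1ne : α - 1 ≠ 0 := sub_ne_zero.mpr (ne_of_gt hα)
  set qc : ℝ := α / (α - 1) with hqcdef
  have hpq : Real.HolderConjugate α qc := by
    exact (Real.holderConjugate_iff_eq_conjExponent hα).mpr hqcdef
  have hqc1 : 1 ≤ qc := hpq.symm.lt.le
  have hqc0 : (0:ℝ) < qc := hpq.symm.pos
  set β := typeIIErrSet ε Φ S with hβdef
  set c : ℝ := qc * Real.log (1 / (1 - ε)) with hcdef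
  have h1ε : (0:ℝ) < 1 - ε := by linarith
  have hkey : ∀ Φf ∈ S, ((-Real.log β - c : ℝ) : EReal) ≤ chRenyiDiv α Φ Φf := by
    intro Φf hΦf
    by_cases hsup : ∀ x, suppLE (Φ x) (Φf x)
    case neg =>
      obtain ⟨x0, hx0⟩ := not_forall.mp hsup
      have htop : sandRenyi α (Φ x0) (Φf x0) = ⊤ := by
        rw [sandRenyi, if_neg hx0]
      have h2 : chRenyiDiv α Φ Φf = ⊤ := by
        refine top_le_iff.mp ?_
        calc (⊤ : EReal) = sandRenyi α (Φ x0) (Φf x0) := htop.symm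
          _ ≤ ⨆ x, sandRenyi α (Φ x) (Φf x) :=
              le_iSup (fun x => sandRenyi α (Φ x) (Φf x)) x0
          _ = chRenyiDiv α Φ Φf := rfl
      rw [h2]
      exact le_top
    case pos =>
      set r : X → ℝ := fun x => (α - 1)⁻¹ *
        Real.log ((matRpow (matRpow (Φf x) ((1 - α) / (2 * α)) * Φ x *
          matRpow (Φf x) ((1 - α) / (2 * α))) α).trace.re) with hrdef
      have hsand : ∀ x, sandRenyi α (Φ x) (Φf x) = ((r x : ℝ) : EReal) := by
        intro x
        rw [sandRenyi, if_pos (hsup x)]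
      obtain ⟨x0, hx0⟩ := Finite.exists_max r
      have hlast : ((r x0 : ℝ) : EReal) ≤ chRenyiDiv α Φ Φf := by
        rw [← hsand x0]
        exact le_iSup (fun x => sandRenyi α (Φ x) (Φf x)) x0
      refine le_trans (EReal.coe_le_coe_iff.mpr ?_) hlast
      set R := r x0 with hRdef
      set θ : ℝ := Real.exp (-R) * (1 - ε) ^ qc with hθdef
      have hθpos : 0 < θ := mul_pos (Real.exp_pos _) (Real.rpow_pos_of_pos h1ε _)
      have hβθ : θ ≤ β := by
        rw [hβdef, typeIIErrSet]
        refine le_csInf ⟨_, ⟨fun _ => ((Fintype.card X : ℝ))⁻¹, fun _ => (1 : Matrix d d ℂ),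
          ?_, ?_, ?_, rfl⟩⟩ ?_
        · constructor
          · intro x
            positivity
          · rw [Finset.sum_const, Finset.card_univ, nsmul_eq_mul]
            have hcard : ((Fintype.card X : ℝ)) ≠ 0 := by
              exact_mod_cast Fintype.card_ne_zero
            field_simp
        · intro x
          exact ⟨Matrix.PosSemidef.one, by rw [sub_self]; exact Matrix.PosSemidef.zero⟩
        · rw [typeIErrVal]
          have hz : ∀ x ∈ Finset.univ (α := X),
              ((Fintype.card X : ℝ))⁻¹ * (((1 : Matrix d d ℂ) - 1) * Φ x).trace.re = 0 := by
            intro x _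
            rw [sub_self, Matrix.zero_mul, Matrix.trace_zero]
            simp
          rw [Finset.sum_congr rfl hz, Finset.sum_const_zero]
          exact hε0
        · rintro v ⟨pp, TT, hprob, hpovm, herr, rfl⟩
          have hCQf := hS Φf hΦf
          set t : X → ℝ := fun x => ((TT x * Φf x).trace).re with htdef
          set a : X → ℝ := fun x => ((TT x * Φ x).trace).re with hadef
          have ha0 : ∀ x, 0 ≤ a x := fun x => trace_mul_psd_re_nonneg (hpovm x).1 (hΦ x).1
          have ht0 : ∀ x, 0 ≤ t x := fun x => trace_mul_psd_re_nonneg (hpovm x).1 (hCQf x).1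
          have hsum_a : 1 - ε ≤ ∑ x, pp x * a x := by
            have hcomp : ∀ x, (((1 - TT x) * Φ x).trace).re = 1 - a x := by
              intro x
              rw [Matrix.sub_mul, Matrix.one_mul, Matrix.trace_sub, (hΦ x).2,
                Complex.sub_re, Complex.one_re]
            have herr' : typeIErrVal Φ pp TT = ∑ x, pp x * (1 - a x) := by
              rw [typeIErrVal]
              exact Finset.sum_congr rfl fun x _ => by rw [hcomp x]
            rw [herr'] at herr
            have hexp : ∑ x, pp x * (1 - a x) = 1 - ∑ x, pp x * a x := by
              simp only [mul_sub, mul_one]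
              rw [Finset.sum_sub_distrib, hprob.2]
            rw [hexp] at herr
            linarith
          have hpt : ∀ x, Real.exp (-R) * a x ^ qc ≤ t x := by
            intro x
            have hk := key_ineq (hΦ x).1 (hCQf x).1 (hpovm x).1 (hpovm x).2 (hsup x) hpq
            set Qx : ℝ := ((matRpow (matRpow (Φf x) ((1 - α) / (2 * α)) * Φ x *
              matRpow (Φf x) ((1 - α) / (2 * α))) α).trace.re) with hQdef
            have hQ0 : 0 ≤ Qx :=
              trace_psd_re_nonneg (matRpow_posSemidef (sandQ_psd (hΦ x).1 (hCQf x).1 _) α)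
            rcases eq_or_lt_of_le hQ0 with hQz | hQpos
            · have haz : a x = 0 := by
                refine le_antisymm ?_ (ha0 x)
                calc a x ≤ Qx ^ α⁻¹ * t x ^ qc⁻¹ := hk
                  _ = 0 := by rw [← hQz, Real.zero_rpow (inv_ne_zero hαne), zero_mul]
              rw [haz, Real.zero_rpow (ne_of_gt hqc0), mul_zero]
              exact ht0 x
            · have hrx : Qx = Real.exp ((α - 1) * r x) := by
                simp only [hrdef]
                rw [← mul_assoc, mul_inv_cancel₀ hα1ne, one_mul, Real.exp_log hQpos]
              have hQle : Qx ≤ Real.exp ((α - 1) * R) := by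
                rw [hrx]
                exact Real.exp_le_exp.mpr (mul_le_mul_of_nonneg_left (hx0 x) (by linarith))
              have hstep1 : a x ^ qc ≤ (Qx ^ α⁻¹ * t x ^ qc⁻¹) ^ qc :=
                Real.rpow_le_rpow (ha0 x) hk (le_of_lt hqc0)
              have hstep2 : (Qx ^ α⁻¹ * t x ^ qc⁻¹) ^ qc = Qx ^ (α⁻¹ * qc) * t x := by
                rw [Real.mul_rpow (Real.rpow_nonneg hQ0 _) (Real.rpow_nonneg (ht0 x) _),
                  ← Real.rpow_mul hQ0, ← Real.rpow_mul (ht0 x),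
                  inv_mul_cancel₀ (ne_of_gt hqc0), Real.rpow_one]
              have hstep3 : Qx ^ (α⁻¹ * qc) ≤ Real.exp R := by
                have h1 : Qx ^ (α⁻¹ * qc) ≤ (Real.exp ((α - 1) * R)) ^ (α⁻¹ * qc) :=
                  Real.rpow_le_rpow hQ0 hQle
                    (le_of_lt (mul_pos (inv_pos.mpr hα0) hqc0))
                have haux : (α - 1) * (α⁻¹ * qc) = 1 := by
                  rw [hqcdef]
                  field_simp
                have h2 : (Real.exp ((α - 1) * R)) ^ (α⁻¹ * qc) = Real.exp R := by
                  rw [← Real.exp_mul]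
                  congr 1
                  calc (α - 1) * R * (α⁻¹ * qc) = R * ((α - 1) * (α⁻¹ * qc)) := by ring
                    _ = R := by rw [haux, mul_one]
                rw [h2] at h1
                exact h1
              calc Real.exp (-R) * a x ^ qc
                  ≤ Real.exp (-R) * (Qx ^ (α⁻¹ * qc) * t x) := by
                    exact mul_le_mul_of_nonneg_left (le_trans hstep1 (le_of_eq hstep2))
                      (Real.exp_pos _).le
                _ ≤ Real.exp (-R) * (Real.exp R * t x) := by
                    exact mul_le_mul_of_nonneg_left
                      (mul_le_mul_of_nonneg_right hstep3 (ht0 x)) (Real.exp_pos _).le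
                _ = t x := by rw [← mul_assoc, ← Real.exp_add]; simp
          have hfinal : θ ≤ ∑ x, pp x * t x := by
            have h1 : ∑ x, pp x * (Real.exp (-R) * a x ^ qc) ≤ ∑ x, pp x * t x :=
              Finset.sum_le_sum fun x _ => mul_le_mul_of_nonneg_left (hpt x) (hprob.1 x)
            have h2 : ∑ x, pp x * (Real.exp (-R) * a x ^ qc)
                = Real.exp (-R) * ∑ x, pp x * a x ^ qc := by
              rw [Finset.mul_sum]
              exact Finset.sum_congr rfl fun x _ => by ring
            have h3 : (∑ x, pp x * a x) ^ qc ≤ ∑ x, pp x * a x ^ qc :=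
              scalarJensen hprob.1 (le_of_eq hprob.2) ha0 hqc1
            have h4 : (1 - ε) ^ qc ≤ (∑ x, pp x * a x) ^ qc :=
              Real.rpow_le_rpow (by linarith) hsum_a (le_of_lt hqc0)
            calc θ = Real.exp (-R) * (1 - ε) ^ qc := rfl
              _ ≤ Real.exp (-R) * (∑ x, pp x * a x) ^ qc :=
                  mul_le_mul_of_nonneg_left h4 (Real.exp_pos _).le
              _ ≤ Real.exp (-R) * ∑ x, pp x * a x ^ qc :=
                  mul_le_mul_of_nonneg_left h3 (Real.exp_pos _).le
              _ = ∑ x, pp x * (Real.exp (-R) * a x ^ qc) := h2.symm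
              _ ≤ ∑ x, pp x * t x := h1
          have hBdd : BddAbove { w | ∃ Φg ∈ S, w = ∑ x, pp x * (TT x * Φg x).trace.re } := by
            refine ⟨1, ?_⟩
            rintro w ⟨Φg, hg, rfl⟩
            calc ∑ x, pp x * ((TT x * Φg x).trace).re ≤ ∑ x, pp x * 1 :=
                  Finset.sum_le_sum fun x _ => mul_le_mul_of_nonneg_left
                    (povm_trace_le_one (hpovm x).2 ((hS Φg hg) x).1 ((hS Φg hg) x).2)
                    (hprob.1 x)
              _ = 1 := by
                  simp only [mul_one]
                  exact hprob.2
          exact le_trans hfinal (le_csSup hBdd ⟨Φf, hΦf, rfl⟩)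
      have hlog := Real.log_le_log hθpos hβθ
      have hlogθ : Real.log θ = -R + qc * Real.log (1 - ε) := by
        rw [hθdef, Real.log_mul (Real.exp_pos _).ne' (Real.rpow_pos_of_pos h1ε _).ne',
          Real.log_exp, Real.log_rpow h1ε]
      have hceq : c = -(qc * Real.log (1 - ε)) := by
        rw [hcdef, one_div, Real.log_inv]
        ring
      rw [hlogθ] at hlog
      rw [hceq]
      linarith
  have h2 : ((-Real.log β - c : ℝ) : EReal) ≤ chRenyiDivSet α Φ S := by
    rw [chRenyiDivSet]
    exact le_iInf₂ hkey
  calc ((-Real.log β : ℝ) : EReal)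
      = ((-Real.log β - c : ℝ) : EReal) + ((c : ℝ) : EReal) := by
        rw [← EReal.coe_add]
        congr 1
        ring
    _ ≤ chRenyiDivSet α Φ S + ((c : ℝ) : EReal) := add_le_add h2 le_rfl


end CQ
end
end

section
/- Rounding lemma of full-rank quantum states: For any sequence {C_n > 0} of parameters and any sequence {ρ^{(n)} ∈ D(H^{⊗n})} of full-rank quantum states satisfying ρ^{(n)} ≥ e^{−C_n n} I for every n, there exists a sequence {ρ̃^{(n)} ∈ D(H^{⊗n})} of quantum states such that for every n: e^{−C_n} ρ^{(n)} ≤ ρ̃^{(n)} ≤ e^{C_n} ρ^{(n)} (as operator inequalities), and the number of distinct eigenvalues of ρ̃^{(n)} is at most n + 1. -/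
open scoped Kronecker
open Filter Matrix
open scoped ComplexOrder

attribute [local instance] Classical.propDecidable

noncomputable section

namespace CQ

variable {X d : Type*}

lemma eig_lb {m : Type*} [Fintype m] [DecidableEq m]
    {A : Matrix m m ℂ} (hA : A.IsHermitian) {c : ℝ}
    (h : (A - c • (1 : Matrix m m ℂ)).PosSemidef) (i : m) :
    c ≤ hA.eigenvalues i := by
  have hv := h.dotProduct_mulVec_nonneg ⇑(hA.eigenvectorBasis i)
  set v : m → ℂ := ⇑(hA.eigenvectorBasis i) with hvdef
  have hnorm : dotProduct (star v) v = 1 := by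
    have h1 : (inner ℂ (hA.eigenvectorBasis i) (hA.eigenvectorBasis i) : ℂ) = 1 := by
      rw [inner_self_eq_norm_sq_to_K, hA.eigenvectorBasis.orthonormal.1 i]; norm_num
    rw [EuclideanSpace.inner_eq_star_dotProduct, dotProduct_comm] at h1
    exact h1
  have hmul : (A - c • (1 : Matrix m m ℂ)) *ᵥ v = ((hA.eigenvalues i - c : ℝ) : ℂ) • v := by
    rw [sub_mulVec, hvdef, hA.mulVec_eigenvectorBasis, Matrix.smul_mulVec, one_mulVec]
    push_cast
    rw [sub_smul]
    congr 1 <;> (ext j; simp [Complex.real_smul])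
  rw [hmul, dotProduct_smul, hnorm, smul_eq_mul, mul_one] at hv
  rw [← sub_nonneg]
  exact_mod_cast hv


/-- **Rounding lemma of full-rank quantum states** (Lemma 3.8): for parameters `C_n > 0` and
full-rank density operators `ρ^{(n)} ∈ D(H^{⊗n})` with `ρ^{(n)} ≥ e^{−C_n n}·I`, there exist
density operators `ρ̃^{(n)}` with `e^{−C_n} ρ^{(n)} ≤ ρ̃^{(n)} ≤ e^{C_n} ρ^{(n)}` and at most
`n + 1` distinct eigenvalues. -/
theorem rounding_lemma_of_full_rank_states
    {d : Type*} [Fintype d] [DecidableEq d] [Nonempty d]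
    (C : ℕ → ℝ) (hC : ∀ n, 0 < C n)
    (ρ : (n : ℕ) → Matrix (Fin n → d) (Fin n → d) ℂ)
    (hρ : ∀ n, (ρ n).PosSemidef ∧ (ρ n).trace = 1)
    (hfull : ∀ n,
      (ρ n - Real.exp (-(C n) * n) • (1 : Matrix (Fin n → d) (Fin n → d) ℂ)).PosSemidef) :
    ∃ ρt : (n : ℕ) → Matrix (Fin n → d) (Fin n → d) ℂ,
      ∀ n, (ρt n).PosSemidef ∧ (ρt n).trace = 1 ∧
        (ρt n - Real.exp (-(C n)) • ρ n).PosSemidef ∧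
        (Real.exp (C n) • ρ n - ρt n).PosSemidef ∧
        (spectrum ℂ (ρt n)).ncard ≤ n + 1 := by
  have key : ∀ n, ∃ σ : Matrix (Fin n → d) (Fin n → d) ℂ,
      σ.PosSemidef ∧ σ.trace = 1 ∧
      (σ - Real.exp (-(C n)) • ρ n).PosSemidef ∧
      (Real.exp (C n) • ρ n - σ).PosSemidef ∧
      (spectrum ℂ σ).ncard ≤ n + 1 := by
    intro n
    set c : ℝ := C n with hcdef
    have hc : 0 < c := hC n
    have hH : (ρ n).IsHermitian := (hρ n).1.1
    set E : (Fin n → d) → ℝ := hH.eigenvalues with hEdef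
    set U : Matrix (Fin n → d) (Fin n → d) ℂ := (hH.eigenvectorUnitary : Matrix (Fin n → d) (Fin n → d) ℂ)
      with hUdef
    -- basic eigenvalue facts
    have hE0 : ∀ i, 0 ≤ E i := (hρ n).1.eigenvalues_nonneg
    have hEl : ∀ i, Real.exp (-c * n) ≤ E i := fun i => eig_lb hH (hfull n) i
    have hElpos : ∀ i, 0 < E i := fun i => lt_of_lt_of_le (Real.exp_pos _) (hEl i)
    have hsum : ∑ i, E i = 1 := by
      have ht : (ρ n).trace = ∑ i, (E i : ℂ) := by
        conv_lhs => rw [hH.spectral_theorem, Unitary.conjStarAlgAut_apply]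
        rw [Matrix.trace_mul_cycle,
          (Unitary.mem_iff.mp hH.eigenvectorUnitary.2).1, one_mul, Matrix.trace_diagonal]
        rfl
      have := (hρ n).2
      rw [ht] at this
      exact_mod_cast this
    have hE1 : ∀ i, E i ≤ 1 := by
      intro i
      rw [← hsum]
      exact Finset.single_le_sum (fun j _ => hE0 j) (Finset.mem_univ i)
    -- the rounding
    set k : (Fin n → d) → ℤ := fun i => ⌈(-Real.log (E i)) / c⌉ with hkdef
    have hk0 : ∀ i, 0 ≤ k i := by
      intro i
      apply Int.ceil_nonneg
      apply div_nonneg _ hc.le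
      simp only [neg_nonneg]
      exact Real.log_nonpos (hE0 i) (hE1 i)
    have hkn : ∀ i, k i ≤ n := by
      intro i
      rw [Int.ceil_le]
      rw [div_le_iff₀ hc]
      have := hEl i
      have h2 : -c * n ≤ Real.log (E i) := by
        calc -c * n = Real.log (Real.exp (-c * n)) := (Real.log_exp _).symm
        _ ≤ Real.log (E i) := Real.log_le_log (Real.exp_pos _) this
      push_cast
      linarith
    set v : (Fin n → d) → ℝ := fun i => Real.exp (-c * (k i : ℝ)) with hvdef
    have hvpos : ∀ i, 0 < v i := fun i => Real.exp_pos _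
    have hvle : ∀ i, v i ≤ E i := by
      intro i
      have h1 : (-Real.log (E i)) / c ≤ (k i : ℝ) := Int.le_ceil _
      have h2 : -c * (k i : ℝ) ≤ Real.log (E i) := by
        rw [div_le_iff₀ hc] at h1; nlinarith
      calc v i = Real.exp (-c * (k i : ℝ)) := rfl
      _ ≤ Real.exp (Real.log (E i)) := Real.exp_le_exp.mpr h2
      _ = E i := Real.exp_log (hElpos i)
    have hvge : ∀ i, Real.exp (-c) * E i ≤ v i := by
      intro i
      have h1 : (k i : ℝ) < (-Real.log (E i)) / c + 1 := Int.ceil_lt_add_one _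
      have h2 : Real.log (E i) - c ≤ -c * (k i : ℝ) := by
        rw [div_add' _ _ _ hc.ne'] at h1
        rw [lt_div_iff₀ hc] at h1
        nlinarith
      calc Real.exp (-c) * E i = Real.exp (-c) * Real.exp (Real.log (E i)) := by
            rw [Real.exp_log (hElpos i)]
      _ = Real.exp (Real.log (E i) - c) := by rw [← Real.exp_add]; ring_nf
      _ ≤ Real.exp (-c * (k i : ℝ)) := Real.exp_le_exp.mpr h2
    set t : ℝ := ∑ i, v i with htdef
    have htpos : 0 < t := Finset.sum_pos (fun i _ => hvpos i) Finset.univ_nonempty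
    have htle1 : t ≤ 1 := by
      rw [← hsum]
      exact Finset.sum_le_sum (fun i _ => hvle i)
    have htge : Real.exp (-c) ≤ t := by
      calc Real.exp (-c) = Real.exp (-c) * ∑ i, E i := by rw [hsum, mul_one]
      _ = ∑ i, Real.exp (-c) * E i := by rw [Finset.mul_sum]
      _ ≤ ∑ i, v i := Finset.sum_le_sum (fun i _ => hvge i)
    set w : (Fin n → d) → ℝ := fun i => t⁻¹ * v i with hwdef
    have hw1 : ∀ i, Real.exp (-c) * E i ≤ w i := by
      intro i
      calc Real.exp (-c) * E i ≤ v i := hvge i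
      _ = 1 * v i := (one_mul _).symm
      _ ≤ t⁻¹ * v i := by
        apply mul_le_mul_of_nonneg_right _ (hvpos i).le
        rw [le_inv_comm₀ one_pos htpos]; simpa using htle1
    have hw2 : ∀ i, w i ≤ Real.exp c * E i := by
      intro i
      have hti : t⁻¹ ≤ Real.exp c := by
        rw [inv_le_comm₀ htpos (Real.exp_pos _), ← Real.exp_neg]
        exact htge
      calc w i = t⁻¹ * v i := rfl
      _ ≤ Real.exp c * v i := mul_le_mul_of_nonneg_right hti (hvpos i).le
      _ ≤ Real.exp c * E i := mul_le_mul_of_nonneg_left (hvle i) (Real.exp_pos _).le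
    set σ : Matrix (Fin n → d) (Fin n → d) ℂ :=
      U * Matrix.diagonal (fun i => (w i : ℂ)) * star U with hσdef
    have hconj : ∀ f : (Fin n → d) → ℝ, (∀ i, 0 ≤ f i) →
        (U * Matrix.diagonal (fun i => (f i : ℂ)) * star U).PosSemidef := by
      intro f hf
      rw [Matrix.star_eq_conjTranspose]
      exact (Matrix.posSemidef_diagonal_iff.mpr fun i =>
        Complex.zero_le_real.mpr (hf i)).mul_mul_conjTranspose_same U
    have hsmulρ : ∀ e : ℝ, e • ρ n =
        U * Matrix.diagonal (fun i => ((e * E i : ℝ) : ℂ)) * star U := by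
      intro e
      conv_lhs => rw [hH.spectral_theorem, Unitary.conjStarAlgAut_apply]
      rw [← Matrix.smul_mul, ← Matrix.mul_smul]
      congr 1
      congr 1
      ext i j
      by_cases h : i = j <;>
        simp [Matrix.diagonal_apply, h, Complex.real_smul, hEdef]
    have hdiff : ∀ f g : (Fin n → d) → ℝ,
        U * Matrix.diagonal (fun i => (f i : ℂ)) * star U -
          U * Matrix.diagonal (fun i => (g i : ℂ)) * star U =
        U * Matrix.diagonal (fun i => ((f i - g i : ℝ) : ℂ)) * star U := by
      intro f g
      rw [← sub_mul, ← mul_sub, Matrix.diagonal_sub]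
      congr 2
      ext i
      push_cast
      ring
    have htrσ : σ.trace = 1 := by
      rw [hσdef, Matrix.trace_mul_cycle,
        (Unitary.mem_iff.mp hH.eigenvectorUnitary.2).1, one_mul, Matrix.trace_diagonal]
      have : ∑ i, ((w i : ℂ)) = ((∑ i, w i : ℝ) : ℂ) := by push_cast; rfl
      rw [this]
      have hws : ∑ i, w i = 1 := by
        rw [hwdef]
        simp only [← Finset.mul_sum, ← htdef]
        exact inv_mul_cancel₀ htpos.ne'
      rw [hws]; norm_num
    refine ⟨σ, hconj w (fun i => by positivity), htrσ, ?_, ?_, ?_⟩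
    · rw [hσdef, hsmulρ (Real.exp (-c)), hdiff]
      exact hconj _ (fun i => sub_nonneg.mpr (hw1 i))
    · rw [hσdef, hsmulρ (Real.exp c), hdiff]
      exact hconj _ (fun i => sub_nonneg.mpr (hw2 i))
    · have hspec : spectrum ℂ σ = Set.range (fun i => (w i : ℂ)) := by
        set u : (Matrix (Fin n → d) (Fin n → d) ℂ)ˣ :=
          Unitary.toUnits hH.eigenvectorUnitary with hudef
        have h1 : σ = (u : Matrix (Fin n → d) (Fin n → d) ℂ) *
            Matrix.diagonal (fun i => (w i : ℂ)) *
            ((u⁻¹ : (Matrix (Fin n → d) (Fin n → d) ℂ)ˣ) :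
              Matrix (Fin n → d) (Fin n → d) ℂ) := rfl
        rw [h1, spectrum.units_conjugate, spectrum_diagonal]
      rw [hspec]
      set f : Fin (n + 1) → ℂ := fun j => ((t⁻¹ * Real.exp (-c * j) : ℝ) : ℂ) with hfdef
      have hsub : Set.range (fun i => (w i : ℂ)) ⊆ Set.range f := by
        rintro z ⟨i, rfl⟩
        refine ⟨⟨(k i).toNat, by have h1 := hk0 i; have h2 := hkn i; omega⟩, ?_⟩
        have hcast : (((k i).toNat : ℕ) : ℝ) = ((k i : ℤ) : ℝ) := by
          exact_mod_cast congrArg (fun z : ℤ => (z : ℝ)) (Int.toNat_of_nonneg (hk0 i))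
        simp only [hfdef, hwdef, hvdef]
        norm_cast
        rw [hcast]
      calc (Set.range (fun i => (w i : ℂ))).ncard
          ≤ (Set.range f).ncard :=
            Set.ncard_le_ncard hsub (Set.finite_range f)
        _ = (f '' Set.univ).ncard := by rw [Set.image_univ]
        _ ≤ (Set.univ : Set (Fin (n + 1))).ncard := Set.ncard_image_le Set.finite_univ
        _ = n + 1 := by rw [Set.ncard_univ]; simp
  choose ρt hρt using key
  exact ⟨ρt, hρt⟩

end CQ
end
end
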